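/- arXiv:1005.4528 — 6 statements merged into one kernel-verified Lean document; each statement's English description precedes it below -/
import Mathlib

section
/- Let $G$ be a group, $n \geq 1$, and for each $i = 1, \ldots, r$ let $\alpha_i : G \to S_n$ be a surjective group homomorphism. Let $\alpha = \prod_i \alpha_i : G \to S_n^r$ and let $\beta : G \to (\mathbb{Z}/2\mathbb{Z})^r$ be the composition of $\alpha$ with the map $S_n^r \to S_n^r/A_n^r \cong (\mathbb{Z}/2\mathbb{Z})^r$ induced by the sign in each coordinate. If $\beta$ is surjective, then $\alpha$ is surjective. -/
open Equiv Equiv.Perm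

lemma aux_hom_even {β : Type*} [DecidableEq β] [Fintype β] (φ : Equiv.Perm β →* ℤˣ)
    (σ : Equiv.Perm β) (hσ : Equiv.Perm.sign σ = 1) : φ σ = 1 := by
  have hmem : σ ∈ alternatingGroup β := Equiv.Perm.mem_alternatingGroup.2 hσ
  rw [← Equiv.Perm.closure_three_cycles_eq_alternating] at hmem
  clear hσ
  induction hmem using Subgroup.closure_induction with
  | mem c hc =>
      have h3 : c ^ 3 = 1 := by
        rw [← Equiv.Perm.IsThreeCycle.orderOf hc]; exact pow_orderOf_eq_one c
      have h3' : φ c * (φ c * φ c) = 1 := by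
        rw [← map_mul, ← map_mul]
        have : c * c * c = c ^ 3 := by rw [pow_succ, pow_two]
        rw [← mul_assoc, this, h3, map_one]
      rwa [Int.units_mul_self, mul_one] at h3'
  | one => exact map_one φ
  | mul x y hx hy px py => rw [map_mul, px, py, one_mul]
  | inv x hx px => rw [map_inv, px, inv_one]


lemma aux_exists_third {β : Type*} [DecidableEq β] [Fintype β] (h : 3 ≤ Fintype.card β)
    (a b : β) : ∃ z, z ≠ a ∧ z ≠ b := by
  by_contra hcon
  push_neg at hcon
  have hsub : (Finset.univ : Finset β) ⊆ {a, b} := by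
    intro z _
    rcases eq_or_ne z a with rfl | hz
    · simp
    · simp [hcon z hz]
  have h2 := Finset.card_le_card hsub
  rw [Finset.card_univ] at h2
  have h3 : ({a, b} : Finset β).card ≤ 2 := by
    refine (Finset.card_insert_le _ _).trans ?_
    simp
  omega

lemma aux_normal_top {β : Type*} [DecidableEq β] [Fintype β] (N : Subgroup (Equiv.Perm β))
    (hconj : ∀ σ ∈ N, ∀ τ : Equiv.Perm β, τ * σ * τ⁻¹ ∈ N)
    (σ₀ : Equiv.Perm β) (h₀ : σ₀ ∈ N) (hs : Equiv.Perm.sign σ₀ = -1) : N = ⊤ := by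
  have hK : ∀ σ ∈ N, ∀ x y : β, Equiv.swap (σ x) (σ y) * Equiv.swap x y ∈ N := by
    intro σ hσ x y
    have h1 : Equiv.swap x y * σ⁻¹ * (Equiv.swap x y)⁻¹ ∈ N := hconj σ⁻¹ (inv_mem hσ) _
    have h2 := N.mul_mem hσ h1
    have he : Equiv.swap (σ x) (σ y) * Equiv.swap x y
        = σ * (Equiv.swap x y * σ⁻¹ * (Equiv.swap x y)⁻¹) := by
      rw [Equiv.swap_apply_apply, Equiv.swap_inv]
      group
    rwa [he]
  -- every three-cycle is in N
  have hthree : ∀ c : Equiv.Perm β, c.IsThreeCycle → c ∈ N := by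
    intro c hc
    have hcard : 3 ≤ Fintype.card β := by
      calc 3 = c.support.card := hc.card_support.symm
        _ ≤ _ := by rw [← Finset.card_univ]; exact Finset.card_le_univ _
    have hne : σ₀ ≠ 1 := by
      rintro rfl
      rw [map_one] at hs
      exact absurd hs (by decide)
    obtain ⟨a, ha⟩ : ∃ a, σ₀ a ≠ a := by
      by_contra hcon; push_neg at hcon; exact hne (Equiv.ext hcon)
    have hex : ∃ c₀ ∈ N, Equiv.Perm.IsThreeCycle c₀ := by
      by_cases hba : σ₀ (σ₀ a) = a
      · by_cases hz : ∃ z, z ≠ a ∧ z ≠ σ₀ a ∧ σ₀ z = z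
        · obtain ⟨z, hza, hzb, hzf⟩ := hz
          refine ⟨_, hK σ₀ h₀ a z, ?_⟩
          rw [hzf, Equiv.swap_comm (σ₀ a) z, Equiv.swap_comm a z]
          exact isThreeCycle_swap_mul_swap_same hzb hza ha
        · push_neg at hz
          obtain ⟨z, hza, hzb⟩ := aux_exists_third hcard a (σ₀ a)
          have hwz : σ₀ z ≠ z := hz z hza hzb
          have hwa : σ₀ z ≠ a := fun h => hzb (σ₀.injective (h.trans hba.symm))
          have hwb : σ₀ z ≠ σ₀ a := fun h => hza (σ₀.injective h)
          have hd : Equiv.swap (σ₀ a) (σ₀ z) * Equiv.swap a z ∈ N := hK σ₀ h₀ a z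
          by_cases hv : ∃ v, v ≠ a ∧ v ≠ σ₀ a ∧ v ≠ z ∧ v ≠ σ₀ z
          · obtain ⟨v, hva, hvb, hvz, hvw⟩ := hv
            have hd' : Equiv.swap (σ₀ a) (σ₀ z) * Equiv.swap a v ∈ N := by
              have h5 := hconj _ hd (Equiv.swap z v)
              have e1 : Equiv.swap z v * Equiv.swap (σ₀ a) (σ₀ z) * (Equiv.swap z v)⁻¹
                  = Equiv.swap (σ₀ a) (σ₀ z) := by
                rw [← Equiv.swap_apply_apply]
                congr 1
                · exact Equiv.swap_apply_of_ne_of_ne (fun h => hzb h.symm) (fun h => hvb h.symm)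
                · exact Equiv.swap_apply_of_ne_of_ne hwz (fun h => hvw h.symm)
              have e2 : Equiv.swap z v * Equiv.swap a z * (Equiv.swap z v)⁻¹
                  = Equiv.swap a v := by
                rw [← Equiv.swap_apply_apply]
                congr 1
                · exact Equiv.swap_apply_of_ne_of_ne (Ne.symm hza) (Ne.symm hva)
                · exact Equiv.swap_apply_left z v
              have e3 : Equiv.swap z v * (Equiv.swap (σ₀ a) (σ₀ z) * Equiv.swap a z) *
                  (Equiv.swap z v)⁻¹ = Equiv.swap (σ₀ a) (σ₀ z) * Equiv.swap a v := by
                calc Equiv.swap z v * (Equiv.swap (σ₀ a) (σ₀ z) * Equiv.swap a z) *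
                      (Equiv.swap z v)⁻¹
                    = (Equiv.swap z v * Equiv.swap (σ₀ a) (σ₀ z) * (Equiv.swap z v)⁻¹) *
                      (Equiv.swap z v * Equiv.swap a z * (Equiv.swap z v)⁻¹) := by group
                  _ = _ := by rw [e1, e2]
              rwa [e3] at h5
            have hp := N.mul_mem hd hd'
            have hsw : Equiv.swap (σ₀ a) (σ₀ z) * Equiv.swap a z
                = Equiv.swap a z * Equiv.swap (σ₀ a) (σ₀ z) := by
              have h6 : Equiv.swap (σ₀ a) (σ₀ z) * Equiv.swap a z *
                  (Equiv.swap (σ₀ a) (σ₀ z))⁻¹ = Equiv.swap a z := by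
                rw [← Equiv.swap_apply_apply]
                congr 1
                · exact Equiv.swap_apply_of_ne_of_ne (Ne.symm ha) (Ne.symm hwa)
                · exact Equiv.swap_apply_of_ne_of_ne hzb (Ne.symm hwz)
              calc Equiv.swap (σ₀ a) (σ₀ z) * Equiv.swap a z
                  = (Equiv.swap (σ₀ a) (σ₀ z) * Equiv.swap a z *
                      (Equiv.swap (σ₀ a) (σ₀ z))⁻¹) * Equiv.swap (σ₀ a) (σ₀ z) := by group
                _ = _ := by rw [h6]
            have hcomm : Equiv.swap (σ₀ a) (σ₀ z) * Equiv.swap a z *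
                (Equiv.swap (σ₀ a) (σ₀ z) * Equiv.swap a v)
                = Equiv.swap a z * Equiv.swap a v := by
              rw [hsw, mul_assoc, ← mul_assoc (Equiv.swap (σ₀ a) (σ₀ z)),
                Equiv.swap_mul_self, one_mul]
            rw [hcomm] at hp
            exact ⟨_, hp, isThreeCycle_swap_mul_swap_same (Ne.symm hza) (Ne.symm hva)
              (Ne.symm hvz)⟩
          · exfalso
            push_neg at hv
            have hσw : σ₀ (σ₀ z) = z := by
              have h1 : σ₀ (σ₀ z) ≠ σ₀ z := hz (σ₀ z) hwa hwb
              have h2 : σ₀ (σ₀ z) ≠ a := fun h => hwb (σ₀.injective (h.trans hba.symm))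
              have h3 : σ₀ (σ₀ z) ≠ σ₀ a := fun h => hwa (σ₀.injective h)
              by_contra h4
              exact h1 (hv _ h2 h3 h4)
            have hall : ∀ x : β, x = a ∨ x = σ₀ a ∨ x = z ∨ x = σ₀ z := by
              intro x
              by_cases h1 : x = a; · exact Or.inl h1
              by_cases h2 : x = σ₀ a; · exact Or.inr (Or.inl h2)
              by_cases h3 : x = z; · exact Or.inr (Or.inr (Or.inl h3))
              exact Or.inr (Or.inr (Or.inr (hv x h1 h2 h3)))
            have hσeq : σ₀ = Equiv.swap a (σ₀ a) * Equiv.swap z (σ₀ z) := by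
              apply Equiv.ext
              intro x
              rcases hall x with rfl | rfl | rfl | rfl
              · rw [Equiv.Perm.mul_apply,
                  Equiv.swap_apply_of_ne_of_ne (Ne.symm hza) (Ne.symm hwa),
                  Equiv.swap_apply_left]
              · rw [Equiv.Perm.mul_apply,
                  Equiv.swap_apply_of_ne_of_ne (Ne.symm hzb) (Ne.symm hwb),
                  Equiv.swap_apply_right, hba]
              · rw [Equiv.Perm.mul_apply, Equiv.swap_apply_left,
                  Equiv.swap_apply_of_ne_of_ne hwa hwb]
              · rw [Equiv.Perm.mul_apply, Equiv.swap_apply_right,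
                  Equiv.swap_apply_of_ne_of_ne hza hzb, hσw]
            rw [hσeq, map_mul, Equiv.Perm.sign_swap (Ne.symm ha),
              Equiv.Perm.sign_swap (Ne.symm hwz)] at hs
            exact absurd hs (by decide)
      · refine ⟨_, hK σ₀ h₀ a (σ₀ a), ?_⟩
        have hbb : σ₀ (σ₀ a) ≠ σ₀ a := fun h => ha (σ₀.injective h)
        rw [Equiv.swap_comm a (σ₀ a)]
        exact isThreeCycle_swap_mul_swap_same (Ne.symm hbb) ha hba
    obtain ⟨c₀, hc₀N, hc₀⟩ := hex
    obtain ⟨u, hu⟩ := isConj_iff.1 (Equiv.Perm.isConj_iff_cycleType_eq.2 (hc₀.trans hc.symm))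
    exact hu ▸ hconj c₀ hc₀N u
  have hAle : ∀ τ : Equiv.Perm β, Equiv.Perm.sign τ = 1 → τ ∈ N := by
    intro τ hτ
    have hmem : τ ∈ alternatingGroup β := Equiv.Perm.mem_alternatingGroup.2 hτ
    rw [← Equiv.Perm.closure_three_cycles_eq_alternating] at hmem
    exact (Subgroup.closure_le N).2 (fun x hx => hthree x hx) hmem
  ext τ
  simp only [Subgroup.mem_top, iff_true]
  rcases Int.units_eq_one_or (Equiv.Perm.sign τ) with h | h
  · exact hAle τ h
  · have h1 : τ * σ₀⁻¹ ∈ N := hAle _ (by rw [map_mul, map_inv, h, hs]; decide)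
    have h2 := N.mul_mem h1 h₀
    simpa using h2

/-- If each `α i : G → Sₙ` is surjective and the induced map to `(ℤ/2)^r` given by
signs is surjective, then the product map `G → Sₙ^r` is surjective. -/

theorem stmt0 {G : Type*} [Group G] (n r : ℕ) (hn : 1 ≤ n)
    (α : Fin r → (G →* Equiv.Perm (Fin n)))
    (hα : ∀ i, Function.Surjective (α i))
    (hβ : Function.Surjective
      (fun g => (fun i => Equiv.Perm.sign ((α i) g)) : G → Fin r → ℤˣ)) :
    Function.Surjective
      (fun g => (fun i => (α i) g) : G → Fin r → Equiv.Perm (Fin n)) := by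
  induction r with
  | zero => exact fun x => ⟨1, funext fun i => i.elim0⟩
  | succ k IH =>
    set αl : G →* Equiv.Perm (Fin n) := α (Fin.last k) with hαl
    -- induction hypothesis applies to the first k coordinates
    have IH' : Function.Surjective
        (fun g => (fun i => (α i.castSucc) g) : G → Fin k → Equiv.Perm (Fin n)) := by
      apply IH (fun i => α i.castSucc) (fun i => hα i.castSucc)
      intro v
      obtain ⟨g, hg⟩ := hβ (Fin.snoc v 1)
      exact ⟨g, funext fun i => (congrFun hg i.castSucc).trans (Fin.snoc_castSucc _ _ i)⟩
    -- there is an element trivial in the first k coordinates with odd last coordinate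
    have hodd : ∃ g : G, (∀ i : Fin k, (α i.castSucc) g = 1) ∧
        Equiv.Perm.sign (αl g) = -1 := by
      by_contra hcon
      push_neg at hcon
      have h1 : ∀ g : G, (∀ i : Fin k, (α i.castSucc) g = 1) →
          Equiv.Perm.sign (αl g) = 1 := by
        intro g hg
        rcases Int.units_eq_one_or (Equiv.Perm.sign (αl g)) with h | h
        · exact h
        · exact absurd h (hcon g hg)
      have h2 : ∀ g h : G, (∀ i : Fin k, (α i.castSucc) g = (α i.castSucc) h) →
          Equiv.Perm.sign (αl g) = Equiv.Perm.sign (αl h) := by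
        intro g h hgh
        have h3 : ∀ i : Fin k, (α i.castSucc) (g * h⁻¹) = 1 := by
          intro i; rw [map_mul, map_inv, hgh i, mul_inv_cancel]
        have h4 := h1 _ h3
        rw [map_mul, map_inv, map_mul, map_inv] at h4
        exact (mul_inv_eq_one.1 h4)
      choose sec hsec using IH'
      let F : (Fin k → Equiv.Perm (Fin n)) →* ℤˣ :=
        { toFun := fun x => Equiv.Perm.sign (αl (sec x))
          map_one' := by
            show Equiv.Perm.sign (αl (sec 1)) = 1
            have e : ∀ i : Fin k, (α i.castSucc) (sec 1) = (α i.castSucc) (1 : G) := by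
              intro i
              have e1 : (α i.castSucc) (sec 1) = (1 : Fin k → Equiv.Perm (Fin n)) i :=
                congrFun (hsec 1) i
              rw [e1, map_one]
              rfl
            rw [h2 (sec 1) 1 e, map_one, map_one]
          map_mul' := by
            intro x y
            show Equiv.Perm.sign (αl (sec (x * y)))
              = Equiv.Perm.sign (αl (sec x)) * Equiv.Perm.sign (αl (sec y))
            have e : ∀ i : Fin k, (α i.castSucc) (sec (x * y)) = (α i.castSucc) (sec x * sec y) := by
              intro i
              have e1 : (α i.castSucc) (sec (x * y)) = (x * y) i := congrFun (hsec (x * y)) i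
              have e2 : (α i.castSucc) (sec x) = x i := congrFun (hsec x) i
              have e3 : (α i.castSucc) (sec y) = y i := congrFun (hsec y) i
              rw [map_mul, e1, e2, e3]
              rfl
            rw [h2 _ _ e, map_mul, map_mul] }
      obtain ⟨g, hg⟩ := hβ (fun j => if j = Fin.last k then (-1 : ℤˣ) else 1)
      have hlast : Equiv.Perm.sign (αl g) = -1 := by
        have := congrFun hg (Fin.last k)
        simpa using this
      have hsigns : ∀ i : Fin k, Equiv.Perm.sign ((α i.castSucc) g) = 1 := by
        intro i
        have := congrFun hg i.castSucc
        simpa [Fin.ne_of_lt (Fin.castSucc_lt_last i)] using this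
      set x : Fin k → Equiv.Perm (Fin n) := fun i => (α i.castSucc) g with hx
      have hFx : F x = -1 := by
        have := h2 (sec x) g (fun i => congrFun (hsec x) i)
        show Equiv.Perm.sign (αl (sec x)) = -1
        rw [this, hlast]
      have hFx1 : F x = 1 := by
        have hone : ∀ i : Fin k, F (Pi.mulSingle i (x i)) = 1 := by
          intro i
          exact aux_hom_even (F.comp (MonoidHom.mulSingle (fun _ => Equiv.Perm (Fin n)) i))
            (x i) (hsigns i)
        have h7 := Finset.map_noncommProd (Finset.univ) (fun i => Pi.mulSingle i (x i))
          (fun i _ j _ _ => Pi.mulSingle_apply_commute x i j) F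
        rw [Finset.noncommProd_mulSingle x] at h7
        rw [h7]; exact (Finset.noncommProd_eq_pow_card _ _ _ 1 (fun i _ => hone i)).trans (one_pow _)
      rw [hFx1] at hFx
      exact absurd hFx (by decide)
    -- the subgroup of last coordinates of elements trivial in the first k coordinates
    let N : Subgroup (Equiv.Perm (Fin n)) :=
      { carrier := {σ | ∃ g : G, (∀ i : Fin k, (α i.castSucc) g = 1) ∧ αl g = σ}
        one_mem' := ⟨1, fun i => map_one _, map_one _⟩
        mul_mem' := by
          rintro σ τ ⟨g, hg, rfl⟩ ⟨h, hh, rfl⟩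
          exact ⟨g * h, fun i => by rw [map_mul, hg i, hh i, one_mul], map_mul _ _ _⟩
        inv_mem' := by
          rintro σ ⟨g, hg, rfl⟩
          exact ⟨g⁻¹, fun i => by rw [map_inv, hg i, inv_one], map_inv _ _⟩ }
    have hconj : ∀ σ ∈ N, ∀ τ : Equiv.Perm (Fin n), τ * σ * τ⁻¹ ∈ N := by
      rintro σ ⟨g, hg, rfl⟩ τ
      obtain ⟨h, hh⟩ := hα (Fin.last k) τ
      refine ⟨h * g * h⁻¹, fun i => ?_, ?_⟩
      · rw [map_mul, map_mul, map_inv, hg i, mul_one, mul_inv_cancel]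
      · rw [map_mul, map_mul, map_inv, hh]
    obtain ⟨g₀, hg₀, hg₀s⟩ := hodd
    have hN : N = ⊤ := aux_normal_top N hconj (αl g₀) ⟨g₀, hg₀, rfl⟩ hg₀s
    have key : ∀ σ : Equiv.Perm (Fin n), ∃ g : G,
        (∀ i : Fin k, (α i.castSucc) g = 1) ∧ αl g = σ := by
      intro σ
      have : σ ∈ N := by rw [hN]; trivial
      exact this
    -- combine
    intro x
    obtain ⟨g₁, hg₁⟩ := IH' (fun i => x i.castSucc)
    obtain ⟨g₂, hg₂, hg₂l⟩ := key ((αl g₁)⁻¹ * x (Fin.last k))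
    refine ⟨g₁ * g₂, funext fun i => ?_⟩
    rcases Fin.eq_castSucc_or_eq_last i with ⟨j, rfl⟩ | rfl
    · show (α j.castSucc) (g₁ * g₂) = x j.castSucc
      rw [map_mul, hg₂ j, mul_one]
      exact congrFun hg₁ j
    · show αl (g₁ * g₂) = x (Fin.last k)
      rw [map_mul, hg₂l, ← mul_assoc, mul_inv_cancel, one_mul]
end

section
/- Let $K$ be a field and let $A_1, \ldots, A_n$ be algebraically independent transcendentals over $K$. Then the Galois group of the generic polynomial $g(X) = X^n + A_1 X^{n-1} + \cdots + A_n$ over the field $K(A_1, \ldots, A_n)$ is isomorphic to the full symmetric group $S_n$. -/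
set_option maxHeartbeats 1000000

open Polynomial
namespace Stmt6Aux
noncomputable section
variable (K : Type*) [Field K] (n : ℕ)

def twist : MvPolynomial (Fin n) K →ₐ[K] MvPolynomial (Fin n) K :=
  MvPolynomial.aeval fun i : Fin n => (-1) ^ ((i : ℕ) + 1) * MvPolynomial.X i
lemma twist_twist (p : MvPolynomial (Fin n) K) : twist K n (twist K n p) = p := by
  have : (twist K n).comp (twist K n) = AlgHom.id K _ := by
    apply MvPolynomial.algHom_ext
    intro i
    simp only [AlgHom.comp_apply, twist, MvPolynomial.aeval_X, map_mul, map_pow, map_neg,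
      map_one, AlgHom.id_apply, MvPolynomial.aeval_X]
    rw [← mul_assoc, ← pow_add, Even.neg_one_pow ⟨(i : ℕ) + 1, rfl⟩, one_mul]
  calc twist K n (twist K n p) = ((twist K n).comp (twist K n)) p := rfl
  _ = p := by rw [this]; rfl

lemma twist_injective : Function.Injective (twist K n) :=
  Function.LeftInverse.injective (twist_twist K n)

/-- `X i ↦ (-1)^(i+1) eₙ₊₁`. -/
def psi : MvPolynomial (Fin n) K →ₐ[K] MvPolynomial (Fin n) K :=
  (((MvPolynomial.symmetricSubalgebra (Fin n) K).val).comp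
    (MvPolynomial.esymmAlgHom (Fin n) K n)).comp (twist K n)

lemma psi_injective : Function.Injective (psi K n) := by
  have : ⇑(psi K n) = Subtype.val ∘ ⇑(MvPolynomial.esymmAlgHom (Fin n) K n) ∘ ⇑(twist K n) := rfl
  rw [this]
  exact Subtype.val_injective.comp
    ((MvPolynomial.esymmAlgHom_fin_injective K le_rfl).comp (twist_injective K n))

lemma psi_X (i : Fin n) :
    psi K n (MvPolynomial.X i)
      = (-1) ^ ((i : ℕ) + 1) * MvPolynomial.esymm (Fin n) K ((i : ℕ) + 1) := by
  simp only [psi, AlgHom.comp_apply, twist, MvPolynomial.aeval_X, map_mul, map_pow, map_neg,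
    map_one]
  congr 1
  show ((MvPolynomial.esymmAlgHom (Fin n) K n) (MvPolynomial.X i) : MvPolynomial (Fin n) K) = _
  rw [MvPolynomial.esymmAlgHom, MvPolynomial.aeval_X]

lemma psi_symmetric (p : MvPolynomial (Fin n) K) (e : Equiv.Perm (Fin n)) :
    MvPolynomial.rename e (psi K n p) = psi K n p :=
  ((MvPolynomial.esymmAlgHom (Fin n) K n) (twist K n p)).2 e


/-- A copy of the fraction field, viewed as the field of the roots. -/
def Mf : Type _ := FractionRing (MvPolynomial (Fin n) K)

instance : Field (Mf K n) := inferInstanceAs (Field (FractionRing _))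
instance : Algebra (MvPolynomial (Fin n) K) (Mf K n) :=
  inferInstanceAs (Algebra _ (FractionRing _))
instance : IsFractionRing (MvPolynomial (Fin n) K) (Mf K n) :=
  inferInstanceAs (IsFractionRing _ (FractionRing _))
instance : Algebra K (Mf K n) := inferInstanceAs (Algebra K (FractionRing _))
instance : IsScalarTower K (MvPolynomial (Fin n) K) (Mf K n) :=
  inferInstanceAs (IsScalarTower K _ (FractionRing _))

def chi : MvPolynomial (Fin n) K →+* Mf K n :=
  (algebraMap (MvPolynomial (Fin n) K) (Mf K n)).comp (psi K n).toRingHom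

lemma chi_injective : Function.Injective (chi K n) :=
  (IsFractionRing.injective _ _).comp (psi_injective K n)

def phi : FractionRing (MvPolynomial (Fin n) K) →+* Mf K n :=
  IsFractionRing.lift (chi_injective K n)

lemma phi_algebraMap (p : MvPolynomial (Fin n) K) :
    phi K n (algebraMap _ _ p) = chi K n p :=
  IsFractionRing.lift_algebraMap _ _

instance : Algebra (FractionRing (MvPolynomial (Fin n) K)) (Mf K n) :=
  (phi K n).toAlgebra

lemma algebraMap_eq_phi :
    algebraMap (FractionRing (MvPolynomial (Fin n) K)) (Mf K n) = phi K n := rfl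

instance : IsScalarTower K (FractionRing (MvPolynomial (Fin n) K)) (Mf K n) := by
  refine IsScalarTower.of_algebraMap_eq fun k => ?_
  rw [algebraMap_eq_phi]
  rw [IsScalarTower.algebraMap_apply K (MvPolynomial (Fin n) K)
    (FractionRing (MvPolynomial (Fin n) K)), phi_algebraMap]
  rw [IsScalarTower.algebraMap_apply K (MvPolynomial (Fin n) K) (Mf K n)]
  simp [chi, MvPolynomial.algebraMap_eq]

/-- The roots. -/
def xx (i : Fin n) : Mf K n := algebraMap (MvPolynomial (Fin n) K) (Mf K n) (MvPolynomial.X i)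

lemma xx_injective : Function.Injective (xx K n) :=
  (IsFractionRing.injective _ _).comp MvPolynomial.X_injective

end
end Stmt6Aux

namespace Stmt6Aux
noncomputable section
variable (K : Type*) [Field K] (n : ℕ)

lemma Multiset.esymm_map_hom {R S : Type*} [CommRing R] [CommRing S]
    (f : R →+* S) (t : Multiset R) (j : ℕ) :
    (t.map f).esymm j = f (t.esymm j) := by
  rw [Multiset.esymm, Multiset.esymm, Multiset.powersetCard_map, Multiset.map_map,
    map_multiset_sum, Multiset.map_map]
  congr 1
  apply Multiset.map_congr rfl
  intro u _
  simp [map_multiset_prod]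

def gg : Polynomial (FractionRing (MvPolynomial (Fin n) K)) :=
  Polynomial.X ^ n + ∑ i : Fin n, Polynomial.C
    (algebraMap (MvPolynomial (Fin n) K) (FractionRing (MvPolynomial (Fin n) K))
      (MvPolynomial.X i)) * Polynomial.X ^ (n - 1 - (i : ℕ))

lemma map_gg :
    (gg K n).map (algebraMap (FractionRing (MvPolynomial (Fin n) K)) (Mf K n)) =
      ∏ i : Fin n, (X - C (xx K n i)) := by
  set f := algebraMap (MvPolynomial (Fin n) K) (Mf K n) with hf
  have hcard : Multiset.card (Multiset.map (xx K n) Finset.univ.val) = n := by simp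
  have hesymm : ∀ j : ℕ, (Multiset.map (xx K n) Finset.univ.val).esymm j
      = f (MvPolynomial.esymm (Fin n) K j) := by
    intro j
    have : Multiset.map (xx K n) Finset.univ.val
        = Multiset.map f (Multiset.map MvPolynomial.X Finset.univ.val) := by
      rw [Multiset.map_map]; rfl
    rw [this, Multiset.esymm_map_hom, MvPolynomial.esymm_eq_multiset_esymm]
  -- RHS to sum form
  have hrhs : (∏ i : Fin n, (X - C (xx K n i)))
      = ∑ j ∈ Finset.range (n + 1),
          (-1) ^ j * (C (f (MvPolynomial.esymm (Fin n) K j)) * X ^ (n - j)) := by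
    rw [Finset.prod_eq_multiset_prod]
    have : Multiset.map (fun i => X - C (xx K n i)) Finset.univ.val
        = Multiset.map (fun t => X - C t) (Multiset.map (xx K n) Finset.univ.val) := by
      rw [Multiset.map_map]; rfl
    rw [this, Multiset.prod_X_sub_X_eq_sum_esymm, hcard]
    refine Finset.sum_congr rfl fun j _ => ?_
    rw [hesymm]
  rw [hrhs, Finset.sum_range_succ']
  -- LHS
  have hco : ∀ i : Fin n,
      (algebraMap (FractionRing (MvPolynomial (Fin n) K)) (Mf K n))
        (algebraMap (MvPolynomial (Fin n) K) (FractionRing (MvPolynomial (Fin n) K))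
          (MvPolynomial.X i))
      = f ((-1) ^ ((i : ℕ) + 1) * MvPolynomial.esymm (Fin n) K ((i : ℕ) + 1)) := by
    intro i
    rw [algebraMap_eq_phi, phi_algebraMap]
    show f (psi K n (MvPolynomial.X i)) = _
    rw [psi_X]
  rw [gg, Polynomial.map_add, Polynomial.map_pow, Polynomial.map_X, Polynomial.map_sum]
  simp only [Polynomial.map_mul, Polynomial.map_C, Polynomial.map_pow, Polynomial.map_X, hco]
  rw [add_comm]
  congr 1
  · -- sums match
    rw [Fin.sum_univ_eq_sum_range
      (fun i => C (f ((-1) ^ (i + 1) * MvPolynomial.esymm (Fin n) K (i + 1))) * X ^ (n - 1 - i))]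
    refine Finset.sum_congr rfl fun i _ => ?_
    rw [map_mul, map_pow, map_neg, map_one, Polynomial.C_mul, Polynomial.C_pow, map_neg, map_one,
      Nat.sub_sub, Nat.add_comm 1 i]
    ring
  · simp [MvPolynomial.esymm_zero]

end
end Stmt6Aux

namespace Stmt6Aux
noncomputable section
variable (K : Type*) [Field K] (n : ℕ)

lemma phi_injective : Function.Injective (phi K n) := (phi K n).injective

lemma monic_map_gg : ((gg K n).map
    (algebraMap (FractionRing (MvPolynomial (Fin n) K)) (Mf K n))).Monic := by
  rw [map_gg]
  exact monic_prod_of_monic _ _ fun i _ => monic_X_sub_C _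

lemma monic_gg : (gg K n).Monic :=
  Polynomial.monic_of_injective (phi_injective K n) (monic_map_gg K n)

lemma gg_ne_zero : gg K n ≠ 0 := (monic_gg K n).ne_zero

lemma splits_gg : Splits ((gg K n).map
    (algebraMap (FractionRing (MvPolynomial (Fin n) K)) (Mf K n))) := by
  rw [map_gg]
  exact Splits.prod fun i _ => Splits.X_sub_C _

lemma roots_map_gg : ((gg K n).map
      (algebraMap (FractionRing (MvPolynomial (Fin n) K)) (Mf K n))).roots
    = Multiset.map (xx K n) Finset.univ.val := by
  rw [map_gg, Finset.prod_eq_multiset_prod]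
  have : Multiset.map (fun i => X - C (xx K n i)) Finset.univ.val
      = Multiset.map (fun t => X - C t) (Multiset.map (xx K n) Finset.univ.val) := by
    rw [Multiset.map_map]; rfl
  rw [this, roots_multiset_prod_X_sub_C]

lemma rootSet_gg : (gg K n).rootSet (Mf K n) = Set.range (xx K n) := by
  have hne : (gg K n).map
      (algebraMap (FractionRing (MvPolynomial (Fin n) K)) (Mf K n)) ≠ 0 :=
    (monic_map_gg K n).ne_zero
  ext m
  rw [Polynomial.mem_rootSet', Polynomial.aeval_def, ← Polynomial.eval_map]
  constructor
  · rintro ⟨-, hm⟩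
    have hmem : m ∈ ((gg K n).map
        (algebraMap (FractionRing (MvPolynomial (Fin n) K)) (Mf K n))).roots :=
      Polynomial.mem_roots'.mpr ⟨hne, hm⟩
    rw [roots_map_gg] at hmem
    rcases Multiset.mem_map.mp hmem with ⟨i, -, rfl⟩
    exact ⟨i, rfl⟩
  · rintro ⟨i, rfl⟩
    refine ⟨hne, ?_⟩
    have hmem : xx K n i ∈ ((gg K n).map
        (algebraMap (FractionRing (MvPolynomial (Fin n) K)) (Mf K n))).roots := by
      rw [roots_map_gg]
      exact Multiset.mem_map.mpr ⟨i, Finset.mem_univ_val i, rfl⟩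
    exact (Polynomial.mem_roots'.mp hmem).2

end
end Stmt6Aux

namespace Stmt6Aux
noncomputable section
variable (K : Type*) [Field K] (n : ℕ)

lemma xx_isRoot (i : Fin n) :
    Polynomial.aeval (xx K n i) (gg K n) = 0 := by
  have hmem : xx K n i ∈ (gg K n).rootSet (Mf K n) := by
    rw [rootSet_gg]; exact ⟨i, rfl⟩
  exact (Polynomial.mem_rootSet'.mp hmem).2

lemma xx_integral (i : Fin n) :
    IsIntegral (FractionRing (MvPolynomial (Fin n) K)) (xx K n i) :=
  ⟨gg K n, monic_gg K n, by
    have := xx_isRoot K n i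
    rwa [Polynomial.aeval_def] at this⟩

lemma algebraMap_mem_adjoin (r : MvPolynomial (Fin n) K) :
    algebraMap (MvPolynomial (Fin n) K) (Mf K n) r ∈
      IntermediateField.adjoin (FractionRing (MvPolynomial (Fin n) K))
        (Set.range (xx K n)) := by
  have h1 : algebraMap (MvPolynomial (Fin n) K) (Mf K n) r
      = MvPolynomial.aeval (xx K n) r := by
    have h0 : (IsScalarTower.toAlgHom K (MvPolynomial (Fin n) K) (Mf K n))
        = MvPolynomial.aeval (xx K n) := by
      apply MvPolynomial.algHom_ext
      intro i
      simp [xx]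
    calc algebraMap (MvPolynomial (Fin n) K) (Mf K n) r
        = (IsScalarTower.toAlgHom K (MvPolynomial (Fin n) K) (Mf K n)) r := rfl
      _ = MvPolynomial.aeval (xx K n) r := by rw [h0]
  rw [h1]
  have h2 : MvPolynomial.aeval (xx K n) r ∈ Algebra.adjoin K (Set.range (xx K n)) := by
    rw [Algebra.adjoin_range_eq_range_aeval]
    exact ⟨r, rfl⟩
  have h3 : Algebra.adjoin K (Set.range (xx K n))
      ≤ ((IntermediateField.adjoin (FractionRing (MvPolynomial (Fin n) K))
        (Set.range (xx K n))).toSubalgebra.restrictScalars K) := by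
    apply Algebra.adjoin_le
    intro m hm
    rw [SetLike.mem_coe, Subalgebra.mem_restrictScalars, IntermediateField.mem_toSubalgebra]
    exact IntermediateField.subset_adjoin _ _ hm
  have h4 := h3 h2
  rw [Subalgebra.mem_restrictScalars, IntermediateField.mem_toSubalgebra] at h4
  exact h4

lemma adjoin_top : IntermediateField.adjoin (FractionRing (MvPolynomial (Fin n) K))
    (Set.range (xx K n)) = ⊤ := by
  rw [eq_top_iff]
  intro m _
  obtain ⟨a, b, hb, rfl⟩ := IsFractionRing.div_surjective (A := MvPolynomial (Fin n) K) m
  exact div_mem (algebraMap_mem_adjoin K n a) (algebraMap_mem_adjoin K n b)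

instance : IsSplittingField (FractionRing (MvPolynomial (Fin n) K)) (Mf K n) (gg K n) := by
  constructor
  · exact splits_gg K n
  · rw [rootSet_gg]
    have halg : ∀ m ∈ Set.range (xx K n),
        IsAlgebraic (FractionRing (MvPolynomial (Fin n) K)) m := by
      rintro m ⟨i, rfl⟩
      exact (xx_integral K n i).isAlgebraic
    rw [← IntermediateField.adjoin_toSubalgebra_of_isAlgebraic halg, adjoin_top]
    rfl

/-- Permutation of the variables as a ring automorphism of the fraction field. -/
def tauRing (e : Equiv.Perm (Fin n)) : Mf K n ≃+* Mf K n :=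
  IsFractionRing.ringEquivOfRingEquiv (MvPolynomial.renameEquiv K e).toRingEquiv

lemma tauRing_algebraMap (e : Equiv.Perm (Fin n)) (a : MvPolynomial (Fin n) K) :
    tauRing K n e (algebraMap (MvPolynomial (Fin n) K) (Mf K n) a)
      = algebraMap (MvPolynomial (Fin n) K) (Mf K n) (MvPolynomial.rename e a) :=
  IsFractionRing.ringEquivOfRingEquiv_algebraMap _ a

lemma tauRing_phi (e : Equiv.Perm (Fin n)) (l : FractionRing (MvPolynomial (Fin n) K)) :
    tauRing K n e (phi K n l) = phi K n l := by
  have : ((tauRing K n e).toRingHom.comp (phi K n)).comp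
        (algebraMap (MvPolynomial (Fin n) K) (FractionRing (MvPolynomial (Fin n) K)))
      = (phi K n).comp
        (algebraMap (MvPolynomial (Fin n) K) (FractionRing (MvPolynomial (Fin n) K))) := by
    refine RingHom.ext fun r => ?_
    simp only [RingHom.comp_apply, RingEquiv.toRingHom_eq_coe, RingHom.coe_coe]
    rw [phi_algebraMap]
    show tauRing K n e (algebraMap _ _ (psi K n r)) = _
    rw [tauRing_algebraMap, psi_symmetric]
    rfl
  have h2 := IsLocalization.ringHom_ext (nonZeroDivisors (MvPolynomial (Fin n) K)) this
  exact DFunLike.congr_fun h2 l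

/-- Permutation of the variables as a Galois automorphism. -/
def tau (e : Equiv.Perm (Fin n)) :
    Mf K n ≃ₐ[FractionRing (MvPolynomial (Fin n) K)] Mf K n :=
  AlgEquiv.ofRingEquiv (f := tauRing K n e) fun l => tauRing_phi K n e l

lemma tau_xx (e : Equiv.Perm (Fin n)) (i : Fin n) :
    tau K n e (xx K n i) = xx K n (e i) := by
  show tauRing K n e (xx K n i) = xx K n (e i)
  rw [xx, tauRing_algebraMap, MvPolynomial.rename_X]
  rfl

/-- `Perm` congruence as a `MulEquiv`. -/
def permMulCongr {α β : Type*} (h : α ≃ β) : Equiv.Perm α ≃* Equiv.Perm β :=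
  { Equiv.permCongr h with
    map_mul' := fun p q => by
      ext b
      simp [Equiv.permCongr_apply, Equiv.Perm.mul_apply] }

end
end Stmt6Aux


open Stmt6Aux in
/-- The Galois group of the generic polynomial
`Xⁿ + A₁ Xⁿ⁻¹ + ⋯ + Aₙ` over `K(A₁, …, Aₙ)` is the full symmetric group `Sₙ`. -/
theorem stmt6 (K : Type*) [Field K] (n : ℕ) (hn : 1 ≤ n)
    (g : Polynomial (FractionRing (MvPolynomial (Fin n) K)))
    (hg : g = Polynomial.X ^ n + ∑ i : Fin n, Polynomial.C
        (algebraMap (MvPolynomial (Fin n) K) (FractionRing (MvPolynomial (Fin n) K))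
          (MvPolynomial.X i)) * Polynomial.X ^ (n - 1 - (i : ℕ))) :
    Nonempty (g.Gal ≃* Equiv.Perm (Fin n)) := by
  classical
  have hgg : g = gg K n := hg
  subst hgg
  haveI : Fact (Splits ((gg K n).map
      (algebraMap (FractionRing (MvPolynomial (Fin n) K)) (Mf K n)))) := ⟨splits_gg K n⟩
  have hroot : ∀ i : Fin n, xx K n i ∈ (gg K n).rootSet (Mf K n) := by
    rw [rootSet_gg]; exact fun i => ⟨i, rfl⟩
  have hrebij : Function.Bijective
      (fun i : Fin n => (⟨xx K n i, hroot i⟩ : (gg K n).rootSet (Mf K n))) := by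
    constructor
    · intro i j h
      exact xx_injective K n (congrArg Subtype.val h)
    · rintro ⟨m, hm⟩
      rw [rootSet_gg] at hm
      obtain ⟨i, rfl⟩ := hm
      exact ⟨i, rfl⟩
  let re : Fin n ≃ ((gg K n).rootSet (Mf K n)) := Equiv.ofBijective _ hrebij
  have hres : Function.Injective
      (fun e : Equiv.Perm (Fin n) => Polynomial.Gal.restrict (gg K n) (Mf K n) (tau K n e)) := by
    intro e f h
    refine Equiv.ext fun i => ?_
    apply xx_injective K n
    have hsmul : (Polynomial.Gal.restrict (gg K n) (Mf K n) (tau K n e))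
        • (⟨xx K n i, hroot i⟩ : (gg K n).rootSet (Mf K n))
        = (Polynomial.Gal.restrict (gg K n) (Mf K n) (tau K n f))
        • (⟨xx K n i, hroot i⟩ : (gg K n).rootSet (Mf K n)) := by
      simp only at h
      rw [h]
    have h2 := congrArg Subtype.val hsmul
    rw [Polynomial.Gal.restrict_smul, Polynomial.Gal.restrict_smul] at h2
    rw [← tau_xx K n e i, ← tau_xx K n f i]
    exact h2
  have hcard1 : Fintype.card (Equiv.Perm (Fin n)) ≤ Fintype.card (gg K n).Gal :=
    Fintype.card_le_of_injective _ hres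
  have hinj2 := Polynomial.Gal.galActionHom_injective (gg K n) (Mf K n)
  have hcard2 : Fintype.card ((gg K n).Gal)
      ≤ Fintype.card (Equiv.Perm ((gg K n).rootSet (Mf K n))) :=
    Fintype.card_le_of_injective _ hinj2
  have hcardeq : Fintype.card (Equiv.Perm ((gg K n).rootSet (Mf K n)))
      = Fintype.card (Equiv.Perm (Fin n)) :=
    Fintype.card_congr (Equiv.permCongr re.symm)
  have hce : Fintype.card ((gg K n).Gal)
      = Fintype.card (Equiv.Perm ((gg K n).rootSet (Mf K n))) :=
    le_antisymm hcard2 (by rw [hcardeq]; exact hcard1)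
  have hbij : Function.Bijective (Polynomial.Gal.galActionHom (gg K n) (Mf K n)) :=
    (Fintype.bijective_iff_injective_and_card _).mpr ⟨hinj2, hce⟩
  exact ⟨(MulEquiv.ofBijective _ hbij).trans (permMulCongr re.symm)⟩
end

section
/- Let $n \geq 1$, let $\Omega$ be a finite set of cardinality $\nu$, let $\sigma \in \mathrm{Sym}(\Omega)$, let $G = \langle \sigma \rangle$, and let $\Omega = \Omega_1 \sqcup \cdots \sqcup \Omega_r$ be the decomposition into $G$-orbits. In the wreath product $H = S_n \wr_\Omega G$, the set $T = \{\eta\sigma : \eta \in S_n^\Omega,\ \eta\sigma \text{ acts transitively on } [n] \times \Omega_i \text{ for every } i\}$ has cardinality $|T| = (n!)^\nu / n^r$. -/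
open Equiv Equiv.Perm
open Fin.NatCast
set_option linter.unusedSectionVars false

lemma perm_apply_inv_self {α : Type*} (g : Equiv.Perm α) (x : α) : g (g⁻¹ x) = x :=
  g.apply_symm_apply x

def PTrans {n : ℕ} (c : Perm (Fin n)) : Prop := ∀ k k' : Fin n, ∃ j : ℕ, (c ^ j) k = k'

lemma pow_mul_fix {n : ℕ} (c : Perm (Fin n)) (x : Fin n) (e : ℕ) (he : (c ^ e) x = x) :
    ∀ t, (c ^ (e * t)) x = x := by
  intro t; induction t with
  | zero => simp
  | succ t ih => rw [Nat.mul_succ, pow_add, mul_apply, he, ih]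

lemma pow_mod_apply {n : ℕ} (c : Perm (Fin n)) (x : Fin n) (e : ℕ) (he : (c ^ e) x = x)
    (j : ℕ) : (c ^ j) x = (c ^ (j % e)) x := by
  conv_lhs => rw [← Nat.div_add_mod j e]
  rw [Nat.add_comm, pow_add, mul_apply, pow_mul_fix c x e he]

lemma F_inj {m : ℕ} (c : Perm (Fin (m + 1))) (hc : PTrans c) :
    Function.Injective (fun i : Fin (m + 1) => (c ^ (i : ℕ)) 0) := by
  have key : ∀ a b : Fin (m + 1), (a : ℕ) ≤ (b : ℕ) →
      (c ^ (a : ℕ)) 0 = (c ^ (b : ℕ)) 0 → a = b := by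
    intro a b hab h
    set e := (b : ℕ) - (a : ℕ) with he
    have hbe : (b : ℕ) = (a : ℕ) + e := by omega
    have h0 : (c ^ e) 0 = 0 := by
      have := h
      rw [hbe, pow_add, mul_apply] at this
      exact ((c ^ (a : ℕ)).injective this.symm)
    by_cases he0 : e = 0
    · exact Fin.ext (by omega)
    · exfalso
      have hsurj : ∀ k : Fin (m + 1), ∃ j ∈ Finset.range e, (c ^ j) 0 = k := by
        intro k
        obtain ⟨j, hj⟩ := hc 0 k
        exact ⟨j % e, Finset.mem_range.mpr (Nat.mod_lt _ (Nat.pos_of_ne_zero he0)),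
          by rw [← pow_mod_apply c 0 e h0 j, hj]⟩
      have hcov : (Finset.range e).image (fun j => (c ^ j) 0) = Finset.univ := by
        apply Finset.eq_univ_iff_forall.mpr
        intro k
        obtain ⟨j, hj, hjk⟩ := hsurj k
        exact Finset.mem_image.mpr ⟨j, hj, hjk⟩
      have h1 : (m + 1 : ℕ) ≤ e := by
        calc (m + 1 : ℕ) = (Finset.univ : Finset (Fin (m+1))).card := by rw [Finset.card_univ, Fintype.card_fin]
        _ = ((Finset.range e).image (fun j => (c ^ j) 0)).card := by rw [hcov]
        _ ≤ (Finset.range e).card := Finset.card_image_le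
        _ = e := Finset.card_range e
      have : e ≤ (b : ℕ) := by omega
      omega
  intro a b hab
  rcases le_total (a : ℕ) (b : ℕ) with h | h
  · exact key a b h hab
  · exact (key b a h hab.symm).symm

lemma addRight_one_pow {m : ℕ} (j : ℕ) (x : Fin (m + 1)) :
    ((Equiv.addRight (1 : Fin (m + 1))) ^ j) x = x + (j : Fin (m + 1))  := by
  induction j generalizing x with
  | zero => simp
  | succ t ih =>
    rw [pow_succ, mul_apply]
    have hx : (Equiv.addRight (1 : Fin (m + 1))) x = x + 1 := rfl
    rw [hx, ih (x + 1)]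
    push_cast
    rw [add_assoc, add_comm (1 : Fin (m + 1))]

lemma cn_pow_apply {m : ℕ} (g : Perm (Fin (m + 1))) (j : ℕ) (x : Fin (m + 1)) :
    ((g * Equiv.addRight (1 : Fin (m + 1)) * g⁻¹) ^ j) x = g (g⁻¹ x + (j : Fin (m + 1))) := by
  rw [conj_pow, mul_apply, mul_apply]
  congr 1
  exact addRight_one_pow j _

lemma conj_ptrans {m : ℕ} (g : Perm (Fin (m + 1))) :
    PTrans (g * Equiv.addRight (1 : Fin (m + 1)) * g⁻¹) := by
  intro k k'
  refine ⟨((g⁻¹ k' - g⁻¹ k : Fin (m + 1)) : ℕ), ?_⟩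
  rw [cn_pow_apply, Fin.cast_val_eq_self, add_sub_cancel]
  exact perm_apply_inv_self g k'

lemma pow_card_fix {m : ℕ} (c : Perm (Fin (m + 1))) (hc : PTrans c) : (c ^ (m + 1)) 0 = 0 := by
  have hbij : Function.Bijective (fun i : Fin (m + 1) => (c ^ (i : ℕ)) 0) :=
    Finite.injective_iff_bijective.mp (F_inj c hc)
  obtain ⟨i, hi⟩ := hbij.2 ((c ^ (m + 1)) 0)
  simp only at hi
  have h0 : (c ^ (m + 1 - (i : ℕ))) 0 = 0 := by
    have h2 : (c ^ ((i : ℕ) + (m + 1 - (i : ℕ)))) 0 = (c ^ (i : ℕ)) 0 := by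
      rw [show (i : ℕ) + (m + 1 - (i : ℕ)) = m + 1 from by omega]
      exact hi.symm
    rw [pow_add, mul_apply] at h2
    exact (c ^ (i : ℕ)).injective h2
  rcases eq_or_ne (m + 1 - (i : ℕ)) (m + 1) with hem | hem
  · rwa [hem] at h0
  · exfalso
    have he0 : m + 1 - (i : ℕ) ≠ 0 := by omega
    have hlt : m + 1 - (i : ℕ) < m + 1 := by omega
    have := F_inj c hc (a₁ := ⟨m + 1 - (i : ℕ), hlt⟩) (a₂ := 0) (by simpa using h0)
    apply he0
    simpa [Fin.ext_iff] using this

noncomputable def transEquiv (m : ℕ) :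
    {c : Perm (Fin (m + 1)) // PTrans c} ≃ {g : Perm (Fin (m + 1)) // g 0 = 0} where
  toFun c := ⟨Equiv.ofBijective _ (Finite.injective_iff_bijective.mp (F_inj c.1 c.2)), by
    simp [Equiv.ofBijective]⟩
  invFun g := ⟨g.1 * Equiv.addRight (1 : Fin (m + 1)) * g.1⁻¹, conj_ptrans g.1⟩
  left_inv := by
    rintro ⟨c, hc⟩
    apply Subtype.ext
    apply Equiv.ext
    intro x
    set g := Equiv.ofBijective _ (Finite.injective_iff_bijective.mp (F_inj c hc)) with hg
    have hgap : ∀ i : Fin (m + 1), g i = (c ^ (i : ℕ)) 0 := fun i => rfl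
    simp only [mul_apply]
    set i := g⁻¹ x with hi
    have hgi : (c ^ (i : ℕ)) 0 = x := by rw [← hgap]; exact g.apply_symm_apply x
    rw [hgap]
    show (c ^ ((i + 1 : Fin (m + 1)) : ℕ)) 0 = c x
    rcases eq_or_ne i (Fin.last m) with h | h
    · have : ((i + 1 : Fin (m + 1)) : ℕ) = 0 := by rw [Fin.val_add_one, if_pos h]
      rw [this, pow_zero]
      have : c x = (c ^ (m + 1)) 0 := by
        rw [← hgi, h, pow_succ', mul_apply, Fin.val_last]
      rw [this, pow_card_fix c hc]
      rfl
    · have : ((i + 1 : Fin (m + 1)) : ℕ) = (i : ℕ) + 1 := by rw [Fin.val_add_one, if_neg h]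
      rw [this, pow_succ', mul_apply, hgi]
  right_inv := by
    rintro ⟨g, hg⟩
    apply Subtype.ext
    apply Equiv.ext
    intro i
    have hginv : g⁻¹ 0 = 0 := by
      apply g.injective; rw [perm_apply_inv_self, hg]
    show ((g * Equiv.addRight (1 : Fin (m + 1)) * g⁻¹) ^ (i : ℕ)) 0 = g i
    rw [cn_pow_apply, hginv, zero_add, Fin.cast_val_eq_self]

lemma card_fix0 (m : ℕ) : Nat.card {g : Perm (Fin (m + 1)) // g 0 = 0} = m.factorial := by
  have e1 : {g : Perm (Fin (m + 1)) // g 0 = 0} ≃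
      {x : Fin (m + 1) × Perm (Fin m) // x.1 = 0} := by
    refine Equiv.subtypeEquiv Equiv.Perm.decomposeFin (fun g => ?_)
    have : g 0 = (Equiv.Perm.decomposeFin g).1 := by
      conv_lhs => rw [← Equiv.Perm.decomposeFin.symm_apply_apply g]
      rw [← Prod.mk.eta (p := Equiv.Perm.decomposeFin g)]
      rw [Equiv.Perm.decomposeFin_symm_apply_zero]
    rw [this]
  have e2 : {x : Fin (m + 1) × Perm (Fin m) // x.1 = 0} ≃ Perm (Fin m) :=
    { toFun := fun x => x.1.2
      invFun := fun e => ⟨(0, e), rfl⟩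
      left_inv := by rintro ⟨⟨p, e⟩, h⟩; simp at h; subst h; rfl
      right_inv := fun e => rfl }
  rw [Nat.card_congr (e1.trans e2), Nat.card_eq_fintype_card, Fintype.card_perm, Fintype.card_fin]

lemma card_ptrans (n : ℕ) (hn : 1 ≤ n) :
    Nat.card {c : Perm (Fin n) // PTrans c} = (n - 1).factorial := by
  obtain ⟨m, rfl⟩ : ∃ m, n = m + 1 := ⟨n - 1, by omega⟩
  rw [Nat.card_congr (transEquiv m), card_fix0]
  congr 1

section Wreath

variable {Ω : Type*} {n : ℕ}

/-- partial products of the cocycle -/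
def pp (σ : Perm Ω) (η : Ω → Perm (Fin n)) : ℕ → Ω → Perm (Fin n)
  | 0, _ => 1
  | (m + 1), ω => η ((σ ^ (m + 1)) ω) * pp σ η m ω

lemma pp_zero (σ : Perm Ω) (η : Ω → Perm (Fin n)) (ω : Ω) : pp σ η 0 ω = 1 := rfl

lemma pp_succ (σ : Perm Ω) (η : Ω → Perm (Fin n)) (m : ℕ) (ω : Ω) :
    pp σ η (m + 1) ω = η ((σ ^ (m + 1)) ω) * pp σ η m ω := rfl

lemma pp_congr (σ : Perm Ω) (η η' : Ω → Perm (Fin n)) (m : ℕ) (ω : Ω)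
    (h : ∀ j, 1 ≤ j → j ≤ m → η ((σ ^ j) ω) = η' ((σ ^ j) ω)) :
    pp σ η m ω = pp σ η' m ω := by
  induction m with
  | zero => rfl
  | succ t ih =>
    rw [pp_succ, pp_succ, h (t + 1) (by omega) (by omega),
      ih (fun j h1 h2 => h j h1 (by omega))]

variable (σ : Perm Ω) (η : Ω → Perm (Fin n)) (W : Perm (Fin n × Ω))
  (hW : ∀ (k : Fin n) (ω : Ω), W (k, ω) = (η (σ ω) k, σ ω))

include hW

lemma pow_w (m : ℕ) (k : Fin n) (ω : Ω) :
    (W ^ m) (k, ω) = (pp σ η m ω k, (σ ^ m) ω) := by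
  induction m with
  | zero => simp [pp_zero]
  | succ t ih =>
    rw [pow_succ', mul_apply, ih, hW]
    have h1 : σ ((σ ^ t) ω) = (σ ^ (t + 1)) ω := by rw [pow_succ', mul_apply]
    rw [pp_succ, mul_apply, h1]

omit hW

/-- minimal period of `σ` at `ω` -/
noncomputable def dd (σ : Perm Ω) (ω : Ω) : ℕ := Function.minimalPeriod ⇑σ ω

variable [Fintype Ω]

lemma mem_pper (ω : Ω) : ω ∈ Function.periodicPts ⇑σ := by
  refine ⟨orderOf σ, orderOf_pos σ, ?_⟩
  show (⇑σ)^[orderOf σ] ω = ω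
  rw [Equiv.Perm.iterate_eq_pow, pow_orderOf_eq_one]
  rfl

lemma dd_pos (ω : Ω) : 0 < dd σ ω :=
  Function.minimalPeriod_pos_of_mem_periodicPts (mem_pper σ ω)

lemma sigma_dd (ω : Ω) : (σ ^ dd σ ω) ω = ω := by
  have := Function.isPeriodicPt_minimalPeriod ⇑σ ω
  rwa [Function.IsPeriodicPt, Function.IsFixedPt, Equiv.Perm.iterate_eq_pow] at this

lemma dd_dvd {m : ℕ} {ω : Ω} (h : (σ ^ m) ω = ω) : dd σ ω ∣ m := by
  apply Function.IsPeriodicPt.minimalPeriod_dvd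
  rwa [Function.IsPeriodicPt, Function.IsFixedPt, Equiv.Perm.iterate_eq_pow]

include hW

lemma cpow (j : ℕ) (k : Fin n) (ω : Ω) :
    (W ^ (dd σ ω * j)) (k, ω) = ((pp σ η (dd σ ω) ω ^ j) k, ω) := by
  induction j generalizing k with
  | zero => simp
  | succ t ih =>
    have : dd σ ω * (t + 1) = dd σ ω + dd σ ω * t := by ring
    rw [this, pow_add, mul_apply, ih k, pow_w σ η W hW, sigma_dd, pow_succ', mul_apply]

omit hW

/-- η is "good" at ω : the return map is transitive -/
noncomputable def Good (σ : Perm Ω) (η : Ω → Perm (Fin n)) (ω : Ω) : Prop :=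
  PTrans (pp σ η (dd σ ω) ω)

include hW

lemma good_of_pairs {ω : Ω}
    (h : ∀ k k' : Fin n, SameCycle W (k, ω) (k', ω)) : Good σ η ω := by
  intro k k'
  obtain ⟨i, -, hi⟩ := (h k k').exists_pow_eq'
  rw [pow_w σ η W hW] at hi
  rw [Prod.mk.injEq] at hi
  obtain ⟨j, rfl⟩ := dd_dvd σ hi.2
  have h2 := (cpow σ η W hW j k ω).symm.trans (pow_w σ η W hW (dd σ ω * j) k ω)
  rw [Prod.mk.injEq] at h2
  exact ⟨j, by rw [h2.1]; exact hi.1⟩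

omit hW

lemma samecycle_nat {α : Type*} (f : Perm α) {x y : α} (m : ℕ) (h : (f ^ m) x = y) :
    SameCycle f x y := ⟨m, by rw [zpow_natCast]; exact h⟩

include hW

lemma good_transfer {ω β : Ω} (hβ : SameCycle σ ω β) (h : Good σ η ω) : Good σ η β := by
  obtain ⟨a, -, ha⟩ := hβ.exists_pow_eq'
  intro k k'
  set e := pp σ η a ω with hee
  obtain ⟨j, hj⟩ := h (e⁻¹ k) (e⁻¹ k')
  have h1 : (W ^ a) (e⁻¹ k, ω) = (k, β) := by
    rw [pow_w σ η W hW, ha, ← hee, perm_apply_inv_self]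
  have h2 : (W ^ a) (e⁻¹ k', ω) = (k', β) := by
    rw [pow_w σ η W hW, ha, ← hee, perm_apply_inv_self]
  have h3 : (W ^ (dd σ ω * j)) (k, β) = (k', β) := by
    calc (W ^ (dd σ ω * j)) (k, β) = (W ^ (dd σ ω * j)) ((W ^ a) (e⁻¹ k, ω)) := by rw [h1]
    _ = (W ^ (dd σ ω * j + a)) (e⁻¹ k, ω) := by rw [pow_add, mul_apply]
    _ = (W ^ (a + dd σ ω * j)) (e⁻¹ k, ω) := by rw [Nat.add_comm]
    _ = (W ^ a) ((W ^ (dd σ ω * j)) (e⁻¹ k, ω)) := by rw [pow_add, mul_apply]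
    _ = (W ^ a) (e⁻¹ k', ω) := by rw [cpow σ η W hW, hj]
    _ = (k', β) := h2
  have h4 := pow_w σ η W hW (dd σ ω * j) k β
  rw [h3, Prod.mk.injEq] at h4
  obtain ⟨j', hj'⟩ := dd_dvd σ h4.2.symm
  rw [hj'] at h3
  have h5 := (cpow σ η W hW j' k β).symm.trans h3
  rw [Prod.mk.injEq] at h5
  exact ⟨j', h5.1⟩

lemma cond_of_good (hall : ∀ ω : Ω, Good σ η ω) :
    ∀ p q : Fin n × Ω, SameCycle σ p.2 q.2 → SameCycle W p q := by
  rintro ⟨k, α⟩ ⟨k', β⟩ h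
  obtain ⟨a, -, ha⟩ := (h : SameCycle σ α β).exists_pow_eq'
  have h1 : SameCycle W (k, α) (pp σ η a α k, β) := by
    refine samecycle_nat W a ?_
    rw [pow_w σ η W hW, ha]
  obtain ⟨j, hj⟩ := hall β (pp σ η a α k) k'
  have h2 : SameCycle W (pp σ η a α k, β) (k', β) := by
    refine samecycle_nat W (dd σ β * j) ?_
    rw [cpow σ η W hW, hj]
  exact h1.trans h2

lemma good_of_cond
    (hc : ∀ p q : Fin n × Ω, SameCycle σ p.2 q.2 → SameCycle W p q) (ω : Ω) :
    Good σ η ω :=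
  good_of_pairs σ η W hW (fun k k' => hc (k, ω) (k', ω) (SameCycle.refl σ ω))

end Wreath

lemma samecycle_iff_mk_eq {Ω : Type*} (σ : Perm Ω) (x y : Ω) :
    SameCycle σ x y ↔
      (Quotient.mk'' x : MulAction.orbitRel.Quotient (Subgroup.zpowers σ) Ω) =
        Quotient.mk'' y := by
  rw [Quotient.eq'']
  constructor
  · rintro ⟨k, hk⟩
    apply MulAction.orbitRel_apply.mpr
    apply MulAction.mem_orbit_iff.mpr
    refine ⟨⟨σ ^ (-k), Subgroup.mem_zpowers_iff.mpr ⟨-k, rfl⟩⟩, ?_⟩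
    rw [Subgroup.mk_smul, Equiv.Perm.smul_def, ← hk, ← Equiv.Perm.mul_apply, ← zpow_add,
      neg_add_cancel, zpow_zero, Equiv.Perm.one_apply]
  · intro h
    obtain ⟨⟨g, hg⟩, hgy⟩ := MulAction.mem_orbit_iff.mp (MulAction.orbitRel_apply.mp h)
    obtain ⟨k, rfl⟩ := Subgroup.mem_zpowers_iff.mp hg
    rw [Subgroup.mk_smul, Equiv.Perm.smul_def] at hgy
    refine ⟨-k, ?_⟩
    rw [← hgy, ← Equiv.Perm.mul_apply, ← zpow_add, neg_add_cancel, zpow_zero,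
      Equiv.Perm.one_apply]

lemma arith (n ν r : ℕ) (hn : 1 ≤ n) (hrν : r ≤ ν) :
    (n - 1).factorial ^ r * n.factorial ^ (ν - r) = n.factorial ^ ν / n ^ r := by
  obtain ⟨m, rfl⟩ : ∃ m, n = m + 1 := ⟨n - 1, by omega⟩
  simp only [Nat.add_sub_cancel]
  have hν' : ν = r + (ν - r) := by omega
  have key : (m + 1).factorial ^ ν = (m + 1) ^ r *
      (m.factorial ^ r * (m + 1).factorial ^ (ν - r)) := by
    conv_lhs => rw [hν', pow_add]
    rw [Nat.factorial_succ, mul_pow, mul_assoc]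
  rw [key, Nat.mul_div_cancel_left _ (Nat.pow_pos (n := r) (by omega))]

/-- In the wreath product `Sₙ ≀_Ω ⟨σ⟩`, the set `T` of elements `ησ`
(`η ∈ Sₙ^Ω`, acting on `[n] × Ω` by `(k, ω) ↦ (η(σω).k, σω)`) that act
transitively on `[n] × Ωᵢ` for every `⟨σ⟩`-orbit `Ωᵢ` has cardinality
`(n!)^ν / n^r`, where `ν = |Ω|` and `r` is the number of orbits. -/
theorem stmt9 {Ω : Type*} [Fintype Ω] (n ν r : ℕ) (hn : 1 ≤ n)
    (hν : Fintype.card Ω = ν) (σ : Equiv.Perm Ω)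
    (hr : r = Nat.card (MulAction.orbitRel.Quotient (Subgroup.zpowers σ) Ω))
    (w : (Ω → Equiv.Perm (Fin n)) → Equiv.Perm (Fin n × Ω))
    (hw : ∀ (η : Ω → Equiv.Perm (Fin n)) (k : Fin n) (ω : Ω),
      w η (k, ω) = ((η (σ ω)) k, σ ω)) :
    Nat.card {η : Ω → Equiv.Perm (Fin n) |
        ∀ p q : Fin n × Ω, (∃ k : ℤ, (σ ^ k) p.2 = q.2) →
          ∃ m : ℤ, ((w η) ^ m) p = q}
      = n.factorial ^ ν / n ^ r := by
  classical
  set Q := MulAction.orbitRel.Quotient (Subgroup.zpowers σ) Ω with hQdef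
  let b : Q → Ω := Quotient.out
  have hb_inj : Function.Injective b := Quotient.out_injective
  have hbq : ∀ q : Q, (Quotient.mk'' (b q) : Q) = q := fun q => Quotient.out_eq' q
  have hscb : ∀ ω : Ω, SameCycle σ (b (Quotient.mk'' ω)) ω := by
    intro ω
    rw [samecycle_iff_mk_eq σ _ ω, hbq]
  let isB : Ω → Prop := fun ω => b (Quotient.mk'' ω) = ω
  have hBb : ∀ q : Q, isB (b q) := by
    intro q; show b (Quotient.mk'' (b q)) = b q; rw [hbq]
  let R : (Ω → Perm (Fin n)) → Ω → Perm (Fin n) := fun η ω => pp σ η (dd σ ω - 1) ω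
  let Φ : (Ω → Perm (Fin n)) → Ω → Perm (Fin n) :=
    fun η ω => if isB ω then η ω * R η ω else η ω
  let Ψ : (Ω → Perm (Fin n)) → Ω → Perm (Fin n) :=
    fun ξ ω => if isB ω then ξ ω * (R ξ ω)⁻¹ else ξ ω
  have hnotB : ∀ ω : Ω, isB ω → ∀ j, 1 ≤ j → j ≤ dd σ ω - 1 → ¬ isB ((σ ^ j) ω) := by
    intro ω hω j h1 h2 hB
    have hsc : SameCycle σ ω ((σ ^ j) ω) := samecycle_nat σ j rfl
    have hmk : (Quotient.mk'' ω : Q) = Quotient.mk'' ((σ ^ j) ω) :=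
      (samecycle_iff_mk_eq σ _ _).1 hsc
    have hfix : (σ ^ j) ω = ω := by
      calc (σ ^ j) ω = b (Quotient.mk'' ((σ ^ j) ω)) := hB.symm
      _ = b (Quotient.mk'' ω) := by rw [hmk]
      _ = ω := hω
    have hdvd := dd_dvd σ hfix
    have hdpos := dd_pos σ ω
    have := Nat.le_of_dvd (by omega) hdvd
    omega
  have hR_congr : ∀ (η η' : Ω → Perm (Fin n)) (ω : Ω),
      (∀ α, ¬ isB α → η α = η' α) → isB ω → R η ω = R η' ω := by
    intro η η' ω hagree hω
    exact pp_congr σ η η' _ ω (fun j h1 h2 => hagree _ (hnotB ω hω j h1 h2))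
  have hΦoff : ∀ η α, ¬ isB α → Φ η α = η α := fun η α h => if_neg h
  have hΨoff : ∀ ξ α, ¬ isB α → Ψ ξ α = ξ α := fun ξ α h => if_neg h
  have hΨΦ : ∀ η, Ψ (Φ η) = η := by
    intro η; funext ω
    by_cases hω : isB ω
    · show (if isB ω then Φ η ω * (R (Φ η) ω)⁻¹ else Φ η ω) = η ω
      rw [if_pos hω, hR_congr (Φ η) η ω (fun α h => hΦoff η α h) hω,
        show Φ η ω = η ω * R η ω from if_pos hω, mul_assoc, mul_inv_cancel, mul_one]
    · rw [hΨoff _ _ hω, hΦoff _ _ hω]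
  have hΦΨ : ∀ ξ, Φ (Ψ ξ) = ξ := by
    intro ξ; funext ω
    by_cases hω : isB ω
    · show (if isB ω then Ψ ξ ω * R (Ψ ξ) ω else Ψ ξ ω) = ξ ω
      rw [if_pos hω, hR_congr (Ψ ξ) ξ ω (fun α h => hΨoff ξ α h) hω,
        show Ψ ξ ω = ξ ω * (R ξ ω)⁻¹ from if_pos hω, mul_assoc, inv_mul_cancel, mul_one]
    · rw [hΦoff _ _ hω, hΨoff _ _ hω]
  let ΦE : (Ω → Perm (Fin n)) ≃ (Ω → Perm (Fin n)) := ⟨Φ, Ψ, hΨΦ, hΦΨ⟩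
  have hcΦ : ∀ (η : Ω → Perm (Fin n)) (ω : Ω), isB ω → pp σ η (dd σ ω) ω = Φ η ω := by
    intro η ω hω
    have hd := dd_pos σ ω
    have hde : dd σ ω = (dd σ ω - 1) + 1 := by omega
    rw [show Φ η ω = η ω * R η ω from if_pos hω]
    conv_lhs => rw [hde, pp_succ, ← hde, sigma_dd σ ω]
  have hiff : ∀ η : Ω → Perm (Fin n),
      (∀ p q : Fin n × Ω, (∃ k : ℤ, (σ ^ k) p.2 = q.2) → ∃ m : ℤ, ((w η) ^ m) p = q)
        ↔ ∀ q : Q, PTrans (ΦE η (b q)) := by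
    intro η
    have hWη : ∀ (k : Fin n) (ω : Ω), w η (k, ω) = (η (σ ω) k, σ ω) := fun k ω => hw η k ω
    constructor
    · intro hc q
      have hgood : Good σ η (b q) := good_of_cond σ η (w η) hWη hc (b q)
      show PTrans (Φ η (b q))
      rw [← hcΦ η (b q) (hBb q)]
      exact hgood
    · intro hg
      apply cond_of_good σ η (w η) hWη
      intro ω
      refine good_transfer σ η (w η) hWη (hscb ω) ?_
      show PTrans (pp σ η (dd σ (b (Quotient.mk'' ω))) (b (Quotient.mk'' ω)))
      rw [hcΦ η _ (hBb (Quotient.mk'' ω))]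
      exact hg _
  let pred : Ω → Prop := fun ω => ∃ q : Q, b q = ω
  let P := Perm (Fin n)
  have e2 : {ξ : Ω → P // ∀ q : Q, PTrans (ξ (b q))} ≃
      {x : ({ω : Ω // pred ω} → P) × ({ω : Ω // ¬ pred ω} → P) //
        ∀ q : Q, PTrans (x.1 ⟨b q, ⟨q, rfl⟩⟩)} :=
    Equiv.subtypeEquiv (Equiv.piEquivPiSubtypeProd pred (fun _ => P)) (fun ξ => Iff.rfl)
  have e3 : {x : ({ω : Ω // pred ω} → P) × ({ω : Ω // ¬ pred ω} → P) //
        ∀ q : Q, PTrans (x.1 ⟨b q, ⟨q, rfl⟩⟩)} ≃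
      ({u : {ω : Ω // pred ω} → P // ∀ q : Q, PTrans (u ⟨b q, ⟨q, rfl⟩⟩)} ×
        ({ω : Ω // ¬ pred ω} → P)) :=
    { toFun := fun x => (⟨x.1.1, x.2⟩, x.1.2)
      invFun := fun y => ⟨(y.1.1, y.2), y.1.2⟩
      left_inv := fun x => rfl
      right_inv := fun y => rfl }
  have e4 : {u : {ω : Ω // pred ω} → P // ∀ q : Q, PTrans (u ⟨b q, ⟨q, rfl⟩⟩)} ≃
      (Q → {c : P // PTrans c}) :=
    { toFun := fun u q => ⟨u.1 ⟨b q, ⟨q, rfl⟩⟩, u.2 q⟩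
      invFun := fun f => ⟨fun x => (f (Quotient.mk'' x.1)).1, fun q => by
        show PTrans ((f (Quotient.mk'' (b q))).1)
        rw [hbq q]
        exact (f q).2⟩
      left_inv := by
        rintro ⟨u, hu⟩
        apply Subtype.ext
        funext x
        show u ⟨b (Quotient.mk'' x.1), ⟨Quotient.mk'' x.1, rfl⟩⟩ = u x
        congr 1
        apply Subtype.ext
        obtain ⟨q, hq⟩ := x.2
        show b (Quotient.mk'' x.1) = x.1
        rw [← hq, hbq]
      right_inv := by
        intro f
        funext q
        apply Subtype.ext
        show (f (Quotient.mk'' (b q))).1 = (f q).1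
        rw [hbq] }
  refine Eq.trans (Nat.card_congr ((Equiv.subtypeEquiv ΦE hiff).trans ((e2.trans e3).trans
    (Equiv.prodCongr e4 (Equiv.refl _))))) ?_
  rw [Nat.card_prod, Nat.card_fun, Nat.card_fun]
  have hcQ : Nat.card Q = r := hr.symm
  have hcC : Nat.card {c : P // PTrans c} = (n - 1).factorial := card_ptrans n hn
  have hcP : Nat.card P = n.factorial := by
    rw [Nat.card_eq_fintype_card, Fintype.card_perm, Fintype.card_fin]
  have hcpred : Nat.card {ω : Ω // pred ω} = r := by
    rw [hr]
    exact (Nat.card_congr (Equiv.ofInjective b hb_inj)).symm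
  have hcompl : Nat.card {ω : Ω // ¬ pred ω} = ν - r := by
    rw [Nat.card_eq_fintype_card, Fintype.card_subtype_compl, hν]
    congr 1
    rw [← Nat.card_eq_fintype_card]
    exact hcpred
  have hrν : r ≤ ν := by
    rw [hr, ← hν]
    have := Nat.card_le_card_of_injective b hb_inj
    rwa [Nat.card_eq_fintype_card (α := Ω)] at this
  rw [hcC, hcQ, hcP, hcompl, arith n ν r hn hrν]
end

section
/- Let $n \geq 1$, let $\Omega$ be a finite set, let $\sigma \in \mathrm{Sym}(\Omega)$, let $G = \langle \sigma \rangle$, and let $\Omega = \Omega_1 \sqcup \cdots \sqcup \Omega_r$ be the $G$-orbit decomposition. Then the normal subgroup $S_n^\Omega$ of $S_n \wr_\Omega G$ acts transitively by conjugation on the set $T$ of elements of the form $\eta\sigma$ ($\eta \in S_n^\Omega$) that act transitively on every $[n] \times \Omega_i$. -/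
private lemma fixed_zpow {X : Type*} (c : Equiv.Perm X) (p : X) (h : c p = p) :
    ∀ m : ℤ, (c ^ m) p = p := by
  have hinv : c⁻¹ p = p := by
    conv_lhs => rw [← h]
    simp
  intro m
  induction m using Int.induction_on with
  | zero => simp
  | succ k ih => rw [zpow_add, zpow_one, Equiv.Perm.mul_apply, h, ih]
  | pred k ih => rw [zpow_sub_one, Equiv.Perm.mul_apply, hinv, ih]

private lemma semiconj_pow {X Y : Type*} (a : Equiv.Perm X) (s : Equiv.Perm Y) (π : X → Y)
    (h : ∀ x, π (a x) = s (π x)) : ∀ (m : ℕ) (x), π ((a ^ m) x) = (s ^ m) (π x) := by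
  intro m
  induction m with
  | zero => simp
  | succ k ih =>
      intro x
      rw [pow_succ, pow_succ, Equiv.Perm.mul_apply, Equiv.Perm.mul_apply, ih, h]

private lemma semiconj_zpow {X Y : Type*} (a : Equiv.Perm X) (s : Equiv.Perm Y) (π : X → Y)
    (h : ∀ x, π (a x) = s (π x)) : ∀ (m : ℤ) (x), π ((a ^ m) x) = (s ^ m) (π x) := by
  have hinv : ∀ x, π (a⁻¹ x) = s⁻¹ (π x) := by
    intro x
    have h2 := h (a⁻¹ x)
    rw [Equiv.Perm.coe_inv, Equiv.apply_symm_apply] at h2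
    rw [h2]; simp
  intro m x
  cases m with
  | ofNat k => simpa using semiconj_pow a s π h k x
  | negSucc k =>
      rw [zpow_negSucc, zpow_negSucc, ← inv_pow, ← inv_pow]
      exact semiconj_pow a⁻¹ s⁻¹ π hinv (k+1) x

private lemma minPeriod_spec {X : Type*} [Fintype X] (c : Equiv.Perm X) (p : X) :
    ∃ d : ℕ, 0 < d ∧ (∀ m : ℤ, (c ^ m) p = p ↔ (d : ℤ) ∣ m) ∧
      (∀ d' : ℕ, 0 < d' → (c ^ (d' : ℤ)) p = p → d ≤ d') := by
  classical
  have hfin : ∃ d : ℕ, 0 < d ∧ (c ^ (d : ℤ)) p = p := by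
    refine ⟨orderOf c, orderOf_pos c, ?_⟩
    rw [zpow_natCast, pow_orderOf_eq_one]
    rfl
  obtain ⟨hd0, hdfix⟩ := Nat.find_spec hfin
  set d := Nat.find hfin with hdd
  have hdvd : ∀ t : ℤ, (c ^ ((d : ℤ) * t)) p = p := fun t => by
    rw [zpow_mul]; exact fixed_zpow _ _ hdfix t
  refine ⟨d, hd0, fun m => ⟨fun hm => ?_, fun ⟨t, ht⟩ => by rw [ht]; exact hdvd t⟩,
    fun d' hd' hfix' => Nat.find_min' hfin ⟨hd', hfix'⟩⟩
  set r := m % (d : ℤ) with hr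
  have h0r : 0 ≤ r := Int.emod_nonneg m (by exact_mod_cast hd0.ne')
  have hrd : r < d := Int.emod_lt_of_pos m (by exact_mod_cast hd0)
  have hm' : m = r + (d : ℤ) * (m / d) := by
    have := Int.mul_ediv_add_emod m d
    omega
  rw [hm', zpow_add, Equiv.Perm.mul_apply, hdvd] at hm
  -- hm : (c ^ r) p = p
  have hr0 : r = 0 := by
    by_contra hne
    have hpos : 0 < r := lt_of_le_of_ne h0r (Ne.symm hne)
    have : d ≤ r.toNat := Nat.find_min' hfin ⟨by omega, by
      rwa [Int.toNat_of_nonneg h0r]⟩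
    omega
  rw [hr0] at hm'
  exact ⟨m / d, by omega⟩

private lemma keyStab {X : Type*} [Fintype X] (a b : Equiv.Perm X) (p : X)
    (horb : Set.range (fun m : ℤ => (a ^ m) p) = Set.range (fun m : ℤ => (b ^ m) p)) :
    ∀ m : ℤ, (a ^ m) p = p ↔ (b ^ m) p = p := by
  classical
  obtain ⟨d1, hd1, hs1, hmin1⟩ := minPeriod_spec a p
  obtain ⟨d2, hd2, hs2, hmin2⟩ := minPeriod_spec b p
  have himg : ∀ (c : Equiv.Perm X) (d : ℕ), 0 < d → (∀ m : ℤ, (c ^ m) p = p ↔ (d : ℤ) ∣ m) →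
      (((Finset.range d).image (fun i : ℕ => (c ^ (i : ℤ)) p) : Finset X) : Set X)
        = Set.range (fun m : ℤ => (c ^ m) p) ∧
      ((Finset.range d).image (fun i : ℕ => (c ^ (i : ℤ)) p)).card = d := by
    intro c d hd hs
    constructor
    · ext q
      simp only [Finset.coe_image, Finset.coe_range, Set.mem_image, Set.mem_Iio,
        Set.mem_range]
      constructor
      · rintro ⟨i, _, hi⟩; exact ⟨i, hi⟩
      · rintro ⟨m, hm⟩
        set r := m % (d : ℤ) with hr
        have h0r : 0 ≤ r := Int.emod_nonneg m (by exact_mod_cast hd.ne')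
        have hrd : r < d := Int.emod_lt_of_pos m (by exact_mod_cast hd)
        refine ⟨r.toNat, by omega, ?_⟩
        have hm' : m = (r.toNat : ℤ) + (d : ℤ) * (m / d) := by
          have := Int.mul_ediv_add_emod m d
          omega
        rw [← hm, hm', zpow_add, Equiv.Perm.mul_apply,
          (hs _).mpr ⟨m / d, rfl⟩]
    · rw [Finset.card_image_of_injOn, Finset.card_range]
      intro i hi j hj hij
      simp only [Finset.coe_range, Set.mem_Iio] at hi hj
      have hij' : (c ^ (i : ℤ)) p = (c ^ (j : ℤ)) p := hij
      have : (c ^ ((i : ℤ) - (j : ℤ))) p = p := by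
        have : (c ^ (-(j : ℤ))) ((c ^ (i : ℤ)) p) = (c ^ (-(j : ℤ))) ((c ^ (j : ℤ)) p) := by
          rw [hij']
        rwa [← Equiv.Perm.mul_apply, ← Equiv.Perm.mul_apply, ← zpow_add, ← zpow_add,
          neg_add_cancel, zpow_zero, Equiv.Perm.one_apply, add_comm, ← sub_eq_add_neg] at this
      obtain ⟨t, ht⟩ := (hs _).mp this
      have ht0 : t = 0 := by
        rcases lt_trichotomy t 0 with h | h | h
        · have : (d : ℤ) * t ≤ (d : ℤ) * (-1) :=
            mul_le_mul_of_nonneg_left (by omega) (by omega)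
          omega
        · exact h
        · have : (d : ℤ) * 1 ≤ (d : ℤ) * t :=
            mul_le_mul_of_nonneg_left (by omega) (by omega)
          omega
      rw [ht0, mul_zero] at ht
      omega
  obtain ⟨hc1, hcard1⟩ := himg a d1 hd1 hs1
  obtain ⟨hc2, hcard2⟩ := himg b d2 hd2 hs2
  have hF : ((Finset.range d1).image (fun i : ℕ => (a ^ (i : ℤ)) p))
      = ((Finset.range d2).image (fun i : ℕ => (b ^ (i : ℤ)) p)) := by
    apply Finset.coe_injective
    rw [hc1, hc2, horb]
  have hd : d1 = d2 := by rw [← hcard1, ← hcard2, hF]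
  intro m
  rw [hs1, hs2, hd]



/-- `Sₙ^Ω` acts transitively by conjugation on the set of elements `ησ` of the
wreath product `Sₙ ≀_Ω ⟨σ⟩` that act transitively on `[n] × Ωᵢ` for every
`⟨σ⟩`-orbit `Ωᵢ`.  Here `e ζ` is the embedding of `ζ ∈ Sₙ^Ω` into
`Sym([n] × Ω)` and `w η` is the permutation corresponding to `ησ`. -/
theorem stmt10 {Ω : Type*} [Fintype Ω] (n : ℕ) (hn : 1 ≤ n)
    (σ : Equiv.Perm Ω)
    (w : (Ω → Equiv.Perm (Fin n)) → Equiv.Perm (Fin n × Ω))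
    (hw : ∀ (η : Ω → Equiv.Perm (Fin n)) (k : Fin n) (ω : Ω),
      w η (k, ω) = ((η (σ ω)) k, σ ω))
    (e : (Ω → Equiv.Perm (Fin n)) → Equiv.Perm (Fin n × Ω))
    (he : ∀ (ζ : Ω → Equiv.Perm (Fin n)) (k : Fin n) (ω : Ω),
      e ζ (k, ω) = ((ζ ω) k, ω)) :
    ∀ η η' : Ω → Equiv.Perm (Fin n),
      (∀ p q : Fin n × Ω, (∃ k : ℤ, (σ ^ k) p.2 = q.2) →
        ∃ m : ℤ, ((w η) ^ m) p = q) →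
      (∀ p q : Fin n × Ω, (∃ k : ℤ, (σ ^ k) p.2 = q.2) →
        ∃ m : ℤ, ((w η') ^ m) p = q) →
      ∃ ζ : Ω → Equiv.Perm (Fin n), (e ζ)⁻¹ * (w η) * (e ζ) = w η' := by
  classical
  intro η η' hη hη'
  set a := w η with ha
  set b := w η' with hb
  -- second-coordinate equivariance
  have hsc : ∀ (c : Equiv.Perm (Fin n × Ω)),
      (∀ k ω, (c (k, ω)).2 = σ ω) → ∀ (m : ℤ) (p : Fin n × Ω), ((c ^ m) p).2 = (σ ^ m) p.2 := by
    intro c hc m p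
    exact semiconj_zpow c σ Prod.snd (fun x => by rcases x with ⟨k, ω⟩; exact hc k ω) m p
  have ha2 : ∀ (m : ℤ) (p : Fin n × Ω), ((a ^ m) p).2 = (σ ^ m) p.2 :=
    hsc a (fun k ω => by rw [ha, hw]) 
  have hb2 : ∀ (m : ℤ) (p : Fin n × Ω), ((b ^ m) p).2 = (σ ^ m) p.2 :=
    hsc b (fun k ω => by rw [hb, hw])
  -- setoid of σ-orbits on Ω
  letI st : Setoid Ω :=
    ⟨fun x y => ∃ k : ℤ, (σ ^ k) x = y,
      ⟨fun x => ⟨0, by simp⟩,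
       fun {x y} h => by
         obtain ⟨k, hk⟩ := h
         exact ⟨-k, by rw [← hk, ← Equiv.Perm.mul_apply, ← zpow_add, neg_add_cancel]; simp⟩,
       fun {x y z} h1 h2 => by
         obtain ⟨k, hk⟩ := h1
         obtain ⟨l, hl⟩ := h2
         exact ⟨l + k, by rw [zpow_add, Equiv.Perm.mul_apply, hk, hl]⟩⟩⟩
  let rep : Ω → Ω := fun ω => (Quotient.mk st ω).out
  have hrep1 : ∀ ω, ∃ k : ℤ, (σ ^ k) (rep ω) = ω := fun ω => Quotient.mk_out ω
  have hrep2 : ∀ ω, rep (σ ω) = rep ω := by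
    intro ω
    have hq : (Quotient.mk st (σ ω)) = Quotient.mk st ω :=
      Quotient.sound ⟨-1, by simp⟩
    simp only [rep, hq]
  let p0 : Ω → Fin n × Ω := fun ω => (⟨0, hn⟩, rep ω)
  have hp02 : ∀ ω, (p0 ω).2 = rep ω := fun ω => rfl
  -- orbits of p0 ω under a and b coincide
  have horb : ∀ ω, Set.range (fun m : ℤ => (a ^ m) (p0 ω))
      = Set.range (fun m : ℤ => (b ^ m) (p0 ω)) := by
    intro ω
    have hgen : ∀ (c : Equiv.Perm (Fin n × Ω)),
        (∀ (m : ℤ) (p : Fin n × Ω), ((c ^ m) p).2 = (σ ^ m) p.2) →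
        (∀ p q : Fin n × Ω, (∃ k : ℤ, (σ ^ k) p.2 = q.2) → ∃ m : ℤ, ((c) ^ m) p = q) →
        Set.range (fun m : ℤ => (c ^ m) (p0 ω)) = {q | ∃ k : ℤ, (σ ^ k) (rep ω) = q.2} := by
      intro c hc2 hct
      ext q
      constructor
      · rintro ⟨m, rfl⟩
        exact ⟨m, (hc2 m (p0 ω)).symm⟩
      · rintro ⟨k, hk⟩
        exact hct (p0 ω) q ⟨k, hk⟩
    rw [hgen a ha2 hη, hgen b hb2 hη']
  have hstab : ∀ (ω) (m : ℤ), (a ^ m) (p0 ω) = p0 ω ↔ (b ^ m) (p0 ω) = p0 ω :=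
    fun ω => keyStab a b (p0 ω) (horb ω)
  -- transfer of equalities between a- and b-powers at p0
  have htransfer : ∀ (ω) (m1 m2 : ℤ),
      (b ^ m1) (p0 ω) = (b ^ m2) (p0 ω) → (a ^ m1) (p0 ω) = (a ^ m2) (p0 ω) := by
    intro ω m1 m2 h
    have h1 : (b ^ (m1 - m2)) (p0 ω) = p0 ω := by
      have := congrArg (⇑(b ^ (-m2))) h
      rwa [← Equiv.Perm.mul_apply, ← Equiv.Perm.mul_apply, ← zpow_add, ← zpow_add,
        neg_add_cancel, zpow_zero, Equiv.Perm.one_apply, add_comm, ← sub_eq_add_neg] at this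
    have h2 : (a ^ (m1 - m2)) (p0 ω) = p0 ω := (hstab ω _).mpr h1
    have : (a ^ m2) ((a ^ (m1 - m2)) (p0 ω)) = (a ^ m2) (p0 ω) := by rw [h2]
    rwa [← Equiv.Perm.mul_apply, ← zpow_add, add_sub_cancel] at this
  have htransfer' : ∀ (ω) (m1 m2 : ℤ),
      (a ^ m1) (p0 ω) = (a ^ m2) (p0 ω) → (b ^ m1) (p0 ω) = (b ^ m2) (p0 ω) := by
    intro ω m1 m2 h
    have h1 : (a ^ (m1 - m2)) (p0 ω) = p0 ω := by
      have := congrArg (⇑(a ^ (-m2))) h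
      rwa [← Equiv.Perm.mul_apply, ← Equiv.Perm.mul_apply, ← zpow_add, ← zpow_add,
        neg_add_cancel, zpow_zero, Equiv.Perm.one_apply, add_comm, ← sub_eq_add_neg] at this
    have h2 : (b ^ (m1 - m2)) (p0 ω) = p0 ω := (hstab ω _).mp h1
    have : (b ^ m2) ((b ^ (m1 - m2)) (p0 ω)) = (b ^ m2) (p0 ω) := by rw [h2]
    rwa [← Equiv.Perm.mul_apply, ← zpow_add, add_sub_cancel] at this
  -- choice of exponents
  have hBex : ∀ p : Fin n × Ω, ∃ m : ℤ, (b ^ m) (p0 p.2) = p :=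
    fun p => hη' (p0 p.2) p (hrep1 p.2)
  have hAex : ∀ p : Fin n × Ω, ∃ m : ℤ, (a ^ m) (p0 p.2) = p :=
    fun p => hη (p0 p.2) p (hrep1 p.2)
  let mB : Fin n × Ω → ℤ := fun p => (hBex p).choose
  have hmB : ∀ p, (b ^ mB p) (p0 p.2) = p := fun p => (hBex p).choose_spec
  let mA : Fin n × Ω → ℤ := fun p => (hAex p).choose
  have hmA : ∀ p, (a ^ mA p) (p0 p.2) = p := fun p => (hAex p).choose_spec
  -- F is conjugator on points; second coordinate preserved
  let F : Fin n × Ω → Fin n × Ω := fun p => (a ^ mB p) (p0 p.2)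
  have hF2 : ∀ p, (F p).2 = p.2 := by
    intro p
    have h1 : ((a ^ mB p) (p0 p.2)).2 = (σ ^ mB p) (rep p.2) := ha2 _ _
    have h2 : ((b ^ mB p) (p0 p.2)).2 = (σ ^ mB p) (rep p.2) := hb2 _ _
    rw [hmB p] at h2
    show ((a ^ mB p) (p0 p.2)).2 = p.2
    rw [h1, ← h2]
  let Gf : Fin n × Ω → Fin n × Ω := fun p => (b ^ mA p) (p0 p.2)
  have hG2 : ∀ p, (Gf p).2 = p.2 := by
    intro p
    have h1 : ((b ^ mA p) (p0 p.2)).2 = (σ ^ mA p) (rep p.2) := hb2 _ _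
    have h2 : ((a ^ mA p) (p0 p.2)).2 = (σ ^ mA p) (rep p.2) := ha2 _ _
    rw [hmA p] at h2
    show ((b ^ mA p) (p0 p.2)).2 = p.2
    rw [h1, ← h2]
  -- the fiberwise permutations
  have hGF : ∀ (k : Fin n) (ω : Ω), (Gf ((F (k, ω)).1, ω)).1 = k := by
    intro k ω
    have hFp : F (k, ω) = ((F (k, ω)).1, ω) := by
      rw [Prod.ext_iff]; exact ⟨rfl, hF2 (k, ω)⟩
    set p' : Fin n × Ω := ((F (k, ω)).1, ω) with hp'
    have hApow : (a ^ mA p') (p0 ω) = (a ^ mB (k, ω)) (p0 ω) := by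
      have h1 : (a ^ mA p') (p0 ω) = p' := hmA p'
      rw [h1, ← hFp]
    have hBpow : (b ^ mA p') (p0 ω) = (b ^ mB (k, ω)) (p0 ω) := htransfer' ω _ _ hApow
    have : Gf p' = (k, ω) := by
      show (b ^ mA p') (p0 p'.2) = (k, ω)
      have hp'2 : p'.2 = ω := rfl
      rw [hp'2, hBpow]
      exact hmB (k, ω)
    rw [this]
  have hFG : ∀ (k : Fin n) (ω : Ω), (F ((Gf (k, ω)).1, ω)).1 = k := by
    intro k ω
    have hGp : Gf (k, ω) = ((Gf (k, ω)).1, ω) := by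
      rw [Prod.ext_iff]; exact ⟨rfl, hG2 (k, ω)⟩
    set p' : Fin n × Ω := ((Gf (k, ω)).1, ω) with hp'
    have hBpow : (b ^ mB p') (p0 ω) = (b ^ mA (k, ω)) (p0 ω) := by
      have h1 : (b ^ mB p') (p0 ω) = p' := hmB p'
      rw [h1, ← hGp]
    have hApow : (a ^ mB p') (p0 ω) = (a ^ mA (k, ω)) (p0 ω) := htransfer ω _ _ hBpow
    have : F p' = (k, ω) := by
      show (a ^ mB p') (p0 p'.2) = (k, ω)
      have hp'2 : p'.2 = ω := rfl
      rw [hp'2, hApow]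
      exact hmA (k, ω)
    rw [this]
  let ζ : Ω → Equiv.Perm (Fin n) := fun ω =>
    { toFun := fun k => (F (k, ω)).1
      invFun := fun k => (Gf (k, ω)).1
      left_inv := fun k => hGF k ω
      right_inv := fun k => hFG k ω }
  refine ⟨ζ, ?_⟩
  -- e ζ = F pointwise
  have heζ : ∀ p : Fin n × Ω, e ζ p = F p := by
    rintro ⟨k, ω⟩
    rw [he]
    show ((F (k, ω)).1, ω) = F (k, ω)
    rw [Prod.ext_iff]; exact ⟨rfl, (hF2 (k, ω)).symm⟩
  -- conjugation identity
  have hconj : ∀ p : Fin n × Ω, a (e ζ p) = e ζ (b p) := by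
    intro p
    rw [heζ, heζ]
    have hbp2 : (b p).2 = σ p.2 := by
      have := hb2 1 p
      simpa using this
    have hrepbp : rep (b p).2 = rep p.2 := by rw [hbp2, hrep2]
    have hp0bp : p0 (b p).2 = p0 p.2 := by
      show ((⟨0, hn⟩ : Fin n), rep (b p).2) = ((⟨0, hn⟩ : Fin n), rep p.2)
      rw [hrepbp]
    have hBeq : (b ^ mB (b p)) (p0 p.2) = (b ^ (mB p + 1)) (p0 p.2) := by
      have h1 : (b ^ mB (b p)) (p0 (b p).2) = b p := hmB (b p)
      rw [hp0bp] at h1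
      rw [h1, show mB p + 1 = 1 + mB p from add_comm _ _, zpow_add, zpow_one,
        Equiv.Perm.mul_apply, hmB p]
    have hAeq : (a ^ mB (b p)) (p0 p.2) = (a ^ (mB p + 1)) (p0 p.2) :=
      htransfer p.2 _ _ hBeq
    show a ((a ^ mB p) (p0 p.2)) = (a ^ mB (b p)) (p0 (b p).2)
    rw [hp0bp, hAeq, show mB p + 1 = 1 + mB p from add_comm _ _, zpow_add, zpow_one,
      Equiv.Perm.mul_apply]
  refine Equiv.ext fun p => ?_
  show (e ζ)⁻¹ (a (e ζ p)) = b p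
  rw [hconj p, Equiv.Perm.coe_inv, Equiv.symm_apply_apply]
end

section
/- Let $K$ be a field of characteristic not $2$, and for a separable polynomial $h \in K[X]$ let $\delta(h) \in K^*/(K^*)^2$ denote the class of its discriminant. Let $T$ be transcendental over $K$, let $n$ be even, let $K$ have characteristic not dividing $n$, and for distinct $\omega_1, \ldots, \omega_m \in K$ set $h_i(X) = X^n - T - \omega_i \in K(T)[X]$. Then the classes $\delta(h_1), \ldots, \delta(h_m) \in K(T)^*/(K(T)^*)^2$ are linearly independent over $\mathbb{F}_2$. -/
open Polynomial

private lemma prod_offDiag_aux {α M : Type*} [DecidableEq α] [CommMonoid M] (s : Finset α)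
    (f : α → α → M) :
    ∏ p ∈ s.offDiag, f p.1 p.2 = ∏ a ∈ s, ∏ b ∈ s.erase a, f a b := by
  exact Finset.prod_finset_product' _ _ _ fun p => by
    simp only [Finset.mem_offDiag, Finset.mem_erase]; tauto

set_option maxHeartbeats 2000000 in
private lemma disc_aux {K : Type*} [Field K] [DecidableEq (AlgebraicClosure (RatFunc K))]
    (n : ℕ) (hn : Even n) (hn1 : 1 ≤ n) (hnF : ((n : ℕ) : RatFunc K) ≠ 0)
    (a : RatFunc K) (ha : a ≠ 0) :
    ∏ p ∈ ((X ^ n - C a : Polynomial (RatFunc K)).aroots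
        (AlgebraicClosure (RatFunc K))).toFinset.offDiag, (p.1 - p.2) =
      algebraMap (RatFunc K) (AlgebraicClosure (RatFunc K)) (-(n : RatFunc K) ^ n * a ^ (n - 1)) := by
  let F := RatFunc K
  let L := AlgebraicClosure F
  set φ := algebraMap (RatFunc K) (AlgebraicClosure (RatFunc K)) with hφ
  set P : Polynomial (RatFunc K) := X ^ n - C a with hP
  have hne : n ≠ 0 := by omega
  have hmon : P.Monic := monic_X_pow_sub_C a hne
  have hsep : P.Separable := separable_X_pow_sub_C a hnF ha
  have hsplit : Splits (P.map φ) := IsAlgClosed.splits _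
  have hnd : (P.aroots L).Nodup := nodup_roots hsep.map
  set s := (P.aroots L).toFinset with hs
  have hsval : s.1 = P.aroots L := by
    rw [hs, Multiset.toFinset_val, Multiset.dedup_eq_self.mpr hnd]
  have hcard : s.card = n := by
    have h1 : P.natDegree = (P.aroots L).card := by
      rw [← natDegree_map φ]; exact hsplit.natDegree_eq_card_roots
    have h2 : P.natDegree = n := natDegree_X_pow_sub_C
    rw [Finset.card, hsval, ← h1, h2]
  have hder : derivative P = C ((n : ℕ) : F) * X ^ (n - 1) := by
    rw [hP, derivative_sub, derivative_C, derivative_X_pow, sub_zero]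
  have hodd : Odd (n - 1) := Nat.Even.sub_odd hn1 hn odd_one
  have hprod : (P.aroots L).prod = -(φ a) := by
    have h1 := hsplit.coeff_zero_eq_prod_roots_of_monic (hmon.map φ)
    have h2 : (P.map φ) = X ^ n - C (φ a) := by
      rw [hP, Polynomial.map_sub, Polynomial.map_pow, Polynomial.map_X, Polynomial.map_C]
    have h3 : (P.map φ).natDegree = n := by rw [h2]; exact natDegree_X_pow_sub_C
    have h4 : (P.map φ).coeff 0 = -(φ a) := by
      rw [h2, coeff_sub, coeff_X_pow, coeff_C]
      simp [hne, eq_comm]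
    rw [h4, h3, hn.neg_one_pow, one_mul] at h1
    exact h1.symm
  calc ∏ p ∈ s.offDiag, (p.1 - p.2)
      = ∏ r ∈ s, ∏ q ∈ s.erase r, (r - q) := prod_offDiag_aux s _
    _ = ∏ r ∈ s, aeval r (derivative P) := by
        refine Finset.prod_congr rfl fun r hr => ?_
        have hrr : r ∈ P.aroots L := Multiset.mem_toFinset.mp hr
        rw [aeval_def, eval₂_eq_eval_map, ← derivative_map,
          hsplit.eval_root_derivative (hmon.map φ) hrr,
          Finset.prod_eq_multiset_prod, Finset.erase_val, hsval]
    _ = ∏ r ∈ s, (φ ((n : ℕ) : F) * r ^ (n - 1)) := by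
        refine Finset.prod_congr rfl fun r _ => ?_
        rw [hder, map_mul, aeval_C, map_pow, aeval_X]
    _ = (φ ((n : ℕ) : F)) ^ n * (∏ r ∈ s, r) ^ (n - 1) := by
        rw [Finset.prod_mul_distrib, Finset.prod_const, hcard, Finset.prod_pow]
    _ = (φ ((n : ℕ) : F)) ^ n * (-(φ a)) ^ (n - 1) := by
        rw [Finset.prod_eq_multiset_prod, Multiset.map_id', hsval, hprod]
    _ = φ (-(n : F) ^ n * a ^ (n - 1)) := by
        rw [hodd.neg_pow, map_mul, map_neg, map_pow, map_pow]
        ring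

/-- For `n` even, `char K ∤ 2n`, and distinct `ω₁, …, ω_m ∈ K`, the discriminant
classes of the polynomials `hᵢ = Xⁿ - T - ωᵢ` over `K(T)` are linearly independent
in the `𝔽₂`-vector space `K(T)ˣ/(K(T)ˣ)²`: no product over a nonempty subset of
the discriminants `Δ(hᵢ) = ∏_{x ≠ y roots} (x - y)` is a square in `K(T)`. -/
theorem stmt12 {K : Type*} [Field K] [DecidableEq (AlgebraicClosure (RatFunc K))] (n m : ℕ) (hn : Even n) (hn1 : 1 ≤ n)
    (hchar2 : ringChar K ≠ 2) (hcharn : ¬ (ringChar K ∣ n))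
    (ω : Fin m → K) (hω : Function.Injective ω)
    (h : Fin m → Polynomial (RatFunc K))
    (hh : ∀ i, h i = Polynomial.X ^ n - Polynomial.C (RatFunc.X + RatFunc.C (ω i)))
    (Δ : Fin m → RatFunc K)
    (hΔ : ∀ i, algebraMap (RatFunc K) (AlgebraicClosure (RatFunc K)) (Δ i) =
      ∏ p ∈ ((h i).aroots (AlgebraicClosure (RatFunc K))).toFinset.offDiag,
        (p.1 - p.2)) :
    ∀ S : Finset (Fin m), S.Nonempty →
      ∀ u : RatFunc K, (∏ i ∈ S, Δ i) ≠ u ^ 2 := by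
  intro S hS u hu
  obtain ⟨i₀, hi₀⟩ := hS
  have hn0 : ((n : ℕ) : K) ≠ 0 := fun hc => hcharn ((ringChar.spec K n).mp hc)
  have hKF : Function.Injective (algebraMap K (RatFunc K)) := (algebraMap K (RatFunc K)).injective
  have hnF : ((n : ℕ) : RatFunc K) ≠ 0 := by
    rw [← map_natCast (algebraMap K (RatFunc K))]
    exact fun hc => hn0 (hKF (hc.trans (map_zero _).symm))
  have hinj : Function.Injective (algebraMap K[X] (RatFunc K)) :=
    IsFractionRing.injective K[X] (RatFunc K)
  have haeq : ∀ i : Fin m, (RatFunc.X + RatFunc.C (ω i) : RatFunc K)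
      = algebraMap K[X] (RatFunc K) (X + C (ω i)) := by
    intro i; rw [map_add, RatFunc.algebraMap_X, RatFunc.algebraMap_C]
  have ha : ∀ i : Fin m, (RatFunc.X + RatFunc.C (ω i) : RatFunc K) ≠ 0 := by
    intro i
    rw [haeq i]
    exact (map_ne_zero_iff _ hinj).mpr (X_add_C_ne_zero _)
  have hΔval : ∀ i, Δ i = -((n : ℕ) : RatFunc K) ^ n *
      (RatFunc.X + RatFunc.C (ω i)) ^ (n - 1) := by
    intro i
    have h1 := hΔ i
    rw [hh i, disc_aux n hn hn1 hnF _ (ha i)] at h1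
    exact (algebraMap (RatFunc K) (AlgebraicClosure (RatFunc K))).injective h1
  set c : K := (-((n : ℕ) : K) ^ n) ^ S.card with hc
  set Q : K[X] := ∏ i ∈ S, (X + C (ω i)) ^ (n - 1) with hQ
  have hSprod : (∏ i ∈ S, Δ i) = algebraMap K[X] (RatFunc K) (C c * Q) := by
    rw [map_mul, RatFunc.algebraMap_C, map_prod]
    simp_rw [hΔval, haeq]
    rw [Finset.prod_mul_distrib, Finset.prod_const, hc]
    simp only [map_neg, map_pow, map_natCast, map_add, RatFunc.algebraMap_X,
      RatFunc.algebraMap_C]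
  have hcne : c ≠ 0 := pow_ne_zero _ (neg_ne_zero.mpr (pow_ne_zero _ hn0))
  have hCcne : (C c : K[X]) ≠ 0 := C_ne_zero.mpr hcne
  have hQne : Q ≠ 0 := by
    rw [hQ]
    exact Finset.prod_ne_zero_iff.mpr fun i _ => pow_ne_zero _ (X_add_C_ne_zero _)
  have hu0 : u ≠ 0 := by
    intro h0
    rw [h0, hSprod] at hu
    have hz : (C c * Q : K[X]) = 0 := hinj (by rw [map_zero]; simpa using hu)
    exact mul_ne_zero hCcne hQne hz
  set N : K[X] := u.num with hN
  set D : K[X] := u.denom with hD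
  have hDne : D ≠ 0 := RatFunc.denom_ne_zero u
  have hNne : N ≠ 0 := RatFunc.num_ne_zero hu0
  have hD2 : (algebraMap K[X] (RatFunc K) D) ≠ 0 := (map_ne_zero_iff _ hinj).mpr hDne
  have hud : u * algebraMap K[X] (RatFunc K) D = algebraMap K[X] (RatFunc K) N := by
    rw [← RatFunc.num_div_denom u, div_mul_cancel₀ _ hD2]
  have hpoly : C c * Q * D ^ 2 = N ^ 2 := by
    apply hinj
    calc algebraMap K[X] (RatFunc K) (C c * Q * D ^ 2)
        = (∏ i ∈ S, Δ i) * (algebraMap K[X] (RatFunc K) D) ^ 2 := by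
          rw [map_mul, ← hSprod, map_pow]
      _ = (u * algebraMap K[X] (RatFunc K) D) ^ 2 := by rw [hu]; ring
      _ = algebraMap K[X] (RatFunc K) (N ^ 2) := by rw [hud, map_pow]
  set r : K := -ω i₀ with hr
  have hXC : (X + C (ω i₀) : K[X]) = X - C r := by rw [hr, map_neg, sub_neg_eq_add]
  set Q' : K[X] := ∏ i ∈ S.erase i₀, (X + C (ω i)) ^ (n - 1) with hQ'
  have hQ'ne : Q' ≠ 0 := by
    rw [hQ']
    exact Finset.prod_ne_zero_iff.mpr fun i _ => pow_ne_zero _ (X_add_C_ne_zero _)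
  have hQsplit : Q = (X - C r) ^ (n - 1) * Q' := by
    rw [hQ, ← Finset.mul_prod_erase S _ hi₀, hXC, hQ']
  have hQ'mult : rootMultiplicity r Q' = 0 := by
    have hev : eval r Q' ≠ 0 := by
      rw [hQ', eval_prod]
      apply Finset.prod_ne_zero_iff.mpr
      intro i hi
      simp only [eval_pow, eval_add, eval_X, eval_C, hr]
      exact pow_ne_zero _ (fun hz => (Finset.mem_erase.mp hi).1
        (hω (by linear_combination hz)))
    exact rootMultiplicity_eq_zero hev
  have hpowne : ((X - C r : K[X]) ^ (n - 1)) ≠ 0 := pow_ne_zero _ (X_sub_C_ne_zero r)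
  have hmult := congrArg (rootMultiplicity r) hpoly
  rw [hQsplit, pow_two D, pow_two N] at hmult
  have e1 : rootMultiplicity r (C c * ((X - C r) ^ (n - 1) * Q') * (D * D))
      = 0 + ((n - 1) + 0) + (rootMultiplicity r D + rootMultiplicity r D) := by
    rw [rootMultiplicity_mul (mul_ne_zero (mul_ne_zero hCcne (mul_ne_zero hpowne hQ'ne))
        (mul_ne_zero hDne hDne)),
      rootMultiplicity_mul (mul_ne_zero hCcne (mul_ne_zero hpowne hQ'ne)),
      rootMultiplicity_mul (mul_ne_zero hpowne hQ'ne),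
      rootMultiplicity_mul (mul_ne_zero hDne hDne),
      rootMultiplicity_C, rootMultiplicity_X_sub_C_pow, hQ'mult]
  have e2 : rootMultiplicity r (N * N) = rootMultiplicity r N + rootMultiplicity r N :=
    rootMultiplicity_mul (mul_ne_zero hNne hNne)
  rw [e1, e2] at hmult
  obtain ⟨k, hk⟩ := hn
  omega
end

section
/- Let $K \subseteq L_i \subseteq M_i$ ($i = 1, \ldots, r$) be towers of finite separable field extensions with $[M_i : L_i] \leq n$, let $N$ be the Galois closure over $K$ of the compositum of the $M_i$, let $H = \mathrm{Gal}(N/K)$, let $\hat{L}$ be the compositum of the Galois closures of the $L_i$ inside $N$, let $G = \mathrm{Gal}(\hat{L}/K)$ acting faithfully on $\Omega = \coprod_i \Omega_i$ where $\Omega_i$ is the set of $K$-embeddings $L_i \hookrightarrow N$. Then there exists an injective group homomorphism $\rho : H \to S_n \wr_\Omega G$ whose composition with the projection $S_n \wr_\Omega G \to G$ is the restriction map $H \to G$. -/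
section WreathAux

variable {H Ω T : Type*} [Group H] [Fintype T] [DecidableEq Ω]
variable (n : ℕ) (p : T → Ω)

/-- canonical (monotone) bijection between two finsets of `Fin n` of equal cardinality. -/
noncomputable def canonIso (s t : Finset (Fin n)) (h : t.card = s.card) :
    {x // x ∈ s} ≃o {x // x ∈ t} :=
  (s.orderIsoOfFin rfl).symm.trans (t.orderIsoOfFin h)

variable (hc : ∀ ω : Ω, Fintype.card {t // p t = ω} ≤ n)

noncomputable def wjj (ω : Ω) : {t // p t = ω} ↪ Fin n :=
  (Function.Embedding.nonempty_of_card_le (by simpa using hc ω)).some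

noncomputable def wS (ω : Ω) : Finset (Fin n) := Finset.univ.map (wjj n p hc ω)

noncomputable def wDS (ω : Ω) :
    Fin n ≃ ({t // p t = ω} ⊕ {x // x ∈ (wS n p hc ω)ᶜ}) :=
  ((Equiv.sumCompl (· ∈ wS n p hc ω)).symm).trans
    (Equiv.sumCongr
      ((Equiv.subtypeEquivRight (fun x => by
          simp [wS, Finset.mem_map, Set.mem_range])).trans
        (Equiv.ofInjective _ (wjj n p hc ω).injective).symm)
      (Equiv.subtypeEquivRight (fun x => (Finset.mem_compl).symm)))

lemma wDS_apply_j (ω : Ω) (y : {t // p t = ω}) :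
    wDS n p hc ω (wjj n p hc ω y) = Sum.inl y := by
  have hm : wjj n p hc ω y ∈ wS n p hc ω := by
    simp [wS, Finset.mem_map]
  simp only [wDS, Equiv.trans_apply, Equiv.sumCompl_symm_apply_of_pos hm,
    Equiv.sumCongr_apply, Sum.map_inl]
  congr 1
  rw [Equiv.symm_apply_eq]
  exact Subtype.ext rfl

variable {n p} in
/-- Transport of fibers along an equality. -/
def castX {ω₁ ω₂ : Ω} (h : ω₁ = ω₂) : {t // p t = ω₁} ≃ {t // p t = ω₂} :=
  Equiv.subtypeEquivRight (fun t => by rw [h])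

/-- Transport of complements along an equality. -/
noncomputable def castCO {ω₁ ω₂ : Ω} (h : ω₁ = ω₂) :
    {x // x ∈ (wS n p hc ω₁)ᶜ} ≃o {x // x ∈ (wS n p hc ω₂)ᶜ} :=
  canonIso n _ _ (by rw [h])

lemma wDS_cast {ω₁ ω₂ : Ω} (h : ω₁ = ω₂) :
    (Equiv.sumCongr (castX h) (castCO n p hc h).toEquiv).trans (wDS n p hc ω₂).symm
      = (wDS n p hc ω₁).symm := by
  subst h
  have h1 : castX (rfl : ω₁ = ω₁) = Equiv.refl {t // p t = ω₁} := by
    ext x; rfl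
  have h2 : castCO n p hc (rfl : ω₁ = ω₁) = OrderIso.refl _ := Subsingleton.elim _ _
  rw [h1, h2]
  ext x
  cases x <;> rfl

variable (act : H →* Equiv.Perm T) (π : H →* Equiv.Perm Ω)
variable (hcompat : ∀ (σ : H) (t : T), p (act σ t) = π σ (p t))

/-- The bijection between fibers induced by the action. -/
def wA (σ : H) (ω : Ω) : {t // p t = ω} ≃ {t // p t = π σ ω} where
  toFun x := ⟨act σ x.1, by rw [hcompat, x.2]⟩
  invFun x := ⟨act σ⁻¹ x.1, by
    rw [hcompat, x.2, map_inv]; exact Equiv.symm_apply_apply _ _⟩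
  left_inv x := Subtype.ext (by
    simp only [← Equiv.Perm.mul_apply, ← map_mul, inv_mul_cancel, map_one,
      Equiv.Perm.coe_one, id_eq])
  right_inv x := Subtype.ext (by
    simp only [← Equiv.Perm.mul_apply, ← map_mul, mul_inv_cancel, map_one,
      Equiv.Perm.coe_one, id_eq])

include hcompat in
lemma wCard (σ : H) (ω : Ω) :
    ((wS n p hc (π σ ω))ᶜ).card = ((wS n p hc ω)ᶜ).card := by
  have h1 : Fintype.card {t // p t = π σ ω} = Fintype.card {t // p t = ω} :=
    Fintype.card_congr (wA p act π hcompat σ ω).symm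
  simp [Finset.card_compl, wS, Finset.card_map, Finset.card_univ, h1]

/-- The wreath-product components. -/
noncomputable def wP (σ : H) (ω : Ω) : Equiv.Perm (Fin n) :=
  (wDS n p hc ω).trans
    ((Equiv.sumCongr (wA p act π hcompat σ ω)
        (canonIso n _ _ (wCard n p hc act π hcompat σ ω)).toEquiv).trans
      (wDS n p hc (π σ ω)).symm)

lemma wP_mul (σ τ : H) (ω : Ω) :
    wP n p hc act π hcompat (σ * τ) ω
      = wP n p hc act π hcompat σ (π τ ω) * wP n p hc act π hcompat τ ω := by
  have hω : π σ (π τ ω) = π (σ * τ) ω := by rw [map_mul]; rfl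
  have hA : wA p act π hcompat (σ * τ) ω
      = ((wA p act π hcompat τ ω).trans (wA p act π hcompat σ (π τ ω))).trans
          (castX hω) := by
    ext x
    show act (σ * τ) x.1 = act σ (act τ x.1)
    rw [map_mul]; rfl
  have hC : (canonIso n _ _ (wCard n p hc act π hcompat (σ * τ) ω)).toEquiv
      = (((canonIso n _ _ (wCard n p hc act π hcompat τ ω)).trans
          ((canonIso n _ _ (wCard n p hc act π hcompat σ (π τ ω))).trans
            (castCO n p hc hω)))).toEquiv :=
    congrArg (fun e : _ ≃o _ => e.toEquiv) (Subsingleton.elim _ _)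
  show (wDS n p hc ω).trans
      ((Equiv.sumCongr (wA p act π hcompat (σ * τ) ω)
        (canonIso n _ _ (wCard n p hc act π hcompat (σ * τ) ω)).toEquiv).trans
      (wDS n p hc (π (σ * τ) ω)).symm) = _
  rw [hA, hC]
  have hC2 : (((canonIso n _ _ (wCard n p hc act π hcompat τ ω)).trans
      ((canonIso n _ _ (wCard n p hc act π hcompat σ (π τ ω))).trans
        (castCO n p hc hω)))).toEquiv
      = ((canonIso n _ _ (wCard n p hc act π hcompat τ ω)).toEquiv.trans
          ((canonIso n _ _ (wCard n p hc act π hcompat σ (π τ ω))).toEquiv.trans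
            (castCO n p hc hω).toEquiv)) := rfl
  rw [hC2]
  rw [show ((wA p act π hcompat τ ω).trans (wA p act π hcompat σ (π τ ω))).trans
      (castX hω) = (wA p act π hcompat τ ω).trans
        ((wA p act π hcompat σ (π τ ω)).trans (castX hω)) from (Equiv.trans_assoc _ _ _)]
  rw [← Equiv.sumCongr_trans, ← Equiv.sumCongr_trans]
  have hfinal := wDS_cast n p hc hω
  ext x
  simp only [Equiv.Perm.mul_apply, Equiv.trans_apply, Equiv.sumCongr_apply, wP,
    ← hfinal]
  simp [Equiv.symm_apply_apply]

include hc hcompat in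
theorem wreath_aux
    (hfaith : ∀ σ : H, act σ = 1 → σ = 1)
    (φ : π.range →* MulAut (Ω → Equiv.Perm (Fin n)))
    (hφ : ∀ (g : π.range) (f : Ω → Equiv.Perm (Fin n)) (x : Ω),
      φ g f x = f ((g : Equiv.Perm Ω)⁻¹ x)) :
    ∃ ρ : H →* (Ω → Equiv.Perm (Fin n)) ⋊[φ] π.range,
      Function.Injective ρ ∧ ∀ σ : H, ((ρ σ).right : Equiv.Perm Ω) = π σ := by
  classical
  let f : H → Ω → Equiv.Perm (Fin n) :=
    fun σ ω => wP n p hc act π hcompat σ ((π σ)⁻¹ ω)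
  have key : ∀ σ τ ω, f (σ * τ) ω = f σ ω * f τ ((π σ)⁻¹ ω) := by
    intro σ τ ω
    have e2 : (π (σ * τ))⁻¹ ω = (π τ)⁻¹ ((π σ)⁻¹ ω) := by
      rw [map_mul, mul_inv_rev]; rfl
    have e1 : π τ ((π (σ * τ))⁻¹ ω) = (π σ)⁻¹ ω := by
      rw [e2]; exact (π τ).apply_symm_apply _
    show wP n p hc act π hcompat (σ * τ) ((π (σ * τ))⁻¹ ω) = _
    rw [wP_mul, e1, e2]
  refine ⟨MonoidHom.mk' (fun σ => ⟨f σ, ⟨π σ, σ, rfl⟩⟩) ?_, ?_, fun σ => rfl⟩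
  · intro σ τ
    refine SemidirectProduct.ext ?_ ?_
    · rw [SemidirectProduct.mul_left]
      funext ω
      show f (σ * τ) ω = (f σ ω) * (φ ⟨π σ, σ, rfl⟩ (f τ)) ω
      rw [hφ, key]
    · rw [SemidirectProduct.mul_right]
      exact Subtype.ext (map_mul π σ τ)
  · rw [injective_iff_map_eq_one]
    intro σ hσ
    have hr : π σ = 1 := congrArg (Subtype.val ∘ SemidirectProduct.right) hσ
    have hl : ∀ ω, wP n p hc act π hcompat σ ω = 1 := by
      intro ω
      have h1 : f σ (π σ ω) = 1 :=
        congrFun (congrArg SemidirectProduct.left hσ) (π σ ω)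
      have h1' : wP n p hc act π hcompat σ ((π σ)⁻¹ (π σ ω)) = 1 := h1
      rwa [show (π σ)⁻¹ ((π σ) ω) = ω from (π σ).symm_apply_apply ω] at h1'
    apply hfaith
    ext t
    show act σ t = t
    have h2 : wP n p hc act π hcompat σ (p t) (wjj n p hc (p t) ⟨t, rfl⟩)
        = wjj n p hc (p t) ⟨t, rfl⟩ := by rw [hl]; rfl
    have h3 : wP n p hc act π hcompat σ (p t) (wjj n p hc (p t) ⟨t, rfl⟩)
        = (wDS n p hc (π σ (p t))).symm
            (Sum.inl (wA p act π hcompat σ (p t) ⟨t, rfl⟩)) := by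
      simp [wP, Equiv.trans_apply, wDS_apply_j]
    rw [h3] at h2
    have h4 : Sum.inl (wA p act π hcompat σ (p t) ⟨t, rfl⟩)
        = wDS n p hc (π σ (p t)) (wjj n p hc (p t) ⟨t, rfl⟩) := by
      rw [← h2, Equiv.apply_symm_apply]
    have h5 : (some (act σ t) : Option T)
        = Sum.elim (fun a : {t' // p t' = π σ (p t)} => some a.1)
            (fun _ => (none : Option T))
            (wDS n p hc (π σ (p t)) (wjj n p hc (p t) ⟨t, rfl⟩)) := by
      rw [← h4]; rfl
    rw [hr, Equiv.Perm.one_apply, wDS_apply_j] at h5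
    exact Option.some_injective _ h5

end WreathAux
set_option maxHeartbeats 2000000 in
set_option synthInstance.maxHeartbeats 1000000 in
/-- Towers `K ⊆ Lᵢ ⊆ Mᵢ` of finite separable extensions inside a Galois extension
`N/K` which is the Galois (normal) closure of the compositum of the `Mᵢ`, with
`[Mᵢ : Lᵢ] ≤ n`.  Let `Ω = ∐ᵢ Ωᵢ` where `Ωᵢ` is the set of `K`-embeddings
`Lᵢ ↪ N`, let `π : Gal(N/K) → Sym(Ω)` be the action by post-composition (whose
image is the permutation group `G = Gal(L̂/K)` on `Ω`), and let `φ` be the action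
of `G` on `Sₙ^Ω` permuting coordinates.  Then there is an injective homomorphism
`ρ : Gal(N/K) → Sₙ ≀_Ω G` whose composition with the projection to `G` is `π`. -/
theorem stmt19 {K N : Type*} [Field K] [Field N] [Algebra K N]
    [FiniteDimensional K N] [IsGalois K N]
    (r n : ℕ) (L : Fin r → IntermediateField K N)
    (M : (i : Fin r) → IntermediateField ↥(L i) N)
    (hMn : ∀ i, Module.finrank ↥(L i) ↥(M i) ≤ n)
    (hN : IntermediateField.normalClosure K ↥(⨆ i, (M i).restrictScalars K) N = ⊤)
    (π : (N ≃ₐ[K] N) →* Equiv.Perm ((i : Fin r) × (↥(L i) →ₐ[K] N)))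
    (hπ : ∀ (σ : N ≃ₐ[K] N) (i : Fin r) (e : ↥(L i) →ₐ[K] N),
      π σ ⟨i, e⟩ = ⟨i, σ.toAlgHom.comp e⟩)
    (φ : π.range →* MulAut (((i : Fin r) × (↥(L i) →ₐ[K] N)) → Equiv.Perm (Fin n)))
    (hφ : ∀ (g : π.range) (f : ((i : Fin r) × (↥(L i) →ₐ[K] N)) → Equiv.Perm (Fin n))
      (x : (i : Fin r) × (↥(L i) →ₐ[K] N)),
      φ g f x = f ((g : Equiv.Perm ((i : Fin r) × (↥(L i) →ₐ[K] N)))⁻¹ x)) :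
    ∃ ρ : (N ≃ₐ[K] N) →*
        ((((i : Fin r) × (↥(L i) →ₐ[K] N)) → Equiv.Perm (Fin n)) ⋊[φ] π.range),
      Function.Injective ρ ∧
      ∀ σ : N ≃ₐ[K] N,
        ((ρ σ).right : Equiv.Perm ((i : Fin r) × (↥(L i) →ₐ[K] N))) = π σ := by
  classical
  -- the total space of embeddings of the `M i` into `N`
  set T := (i : Fin r) × (↥((M i).restrictScalars K) →ₐ[K] N) with hT
  have hLM : ∀ i, L i ≤ (M i).restrictScalars K := by
    intro i x hx
    exact (M i).algebraMap_mem (⟨x, hx⟩ : ↥(L i))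
  -- the restriction map
  let p : T → (i : Fin r) × (↥(L i) →ₐ[K] N) :=
    fun t => ⟨t.1, t.2.comp (IntermediateField.inclusion (hLM t.1))⟩
  -- the action of the Galois group on `T`
  let actE : (N ≃ₐ[K] N) → T → T := fun σ t => ⟨t.1, σ.toAlgHom.comp t.2⟩
  have actE_mul : ∀ (σ τ : N ≃ₐ[K] N) (t : T), actE (σ * τ) t = actE σ (actE τ t) := by
    intro σ τ t
    exact congrArg (Sigma.mk t.1) (AlgHom.ext fun x => rfl)
  have actinv : ∀ (σ : N ≃ₐ[K] N) (t : T), actE σ⁻¹ (actE σ t) = t := by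
    intro σ t
    exact congrArg (Sigma.mk t.1) (AlgHom.ext fun x => σ.symm_apply_apply (t.2 x))
  let act : (N ≃ₐ[K] N) →* Equiv.Perm T := MonoidHom.mk'
    (fun σ =>
      { toFun := actE σ, invFun := actE σ⁻¹,
        left_inv := actinv σ,
        right_inv := fun t => by have h := actinv σ⁻¹ t; rwa [inv_inv] at h })
    (fun σ τ => Equiv.ext (actE_mul σ τ))
  have hcompat : ∀ (σ : N ≃ₐ[K] N) (t : T), p (act σ t) = π σ (p t) := by
    intro σ t
    rw [show p t = ⟨t.1, t.2.comp (IntermediateField.inclusion (hLM t.1))⟩ from rfl, hπ]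
    exact congrArg (Sigma.mk t.1) (AlgHom.comp_assoc _ _ _)
  -- faithfulness
  have hfaith : ∀ σ : N ≃ₐ[K] N, act σ = 1 → σ = 1 := by
    intro σ hσ
    have hfix : ∀ (i : Fin r) (f : ↥((M i).restrictScalars K) →ₐ[K] N),
        σ.toAlgHom.comp f = f := by
      intro i f
      have h1 : actE σ ⟨i, f⟩ = (⟨i, f⟩ : T) := congrFun (congrArg (fun e : Equiv.Perm T => (e : T → T)) hσ) ⟨i, f⟩
      exact eq_of_heq (Sigma.mk.inj_iff.mp h1).2
    have hfix2 : ∀ g : ↥(⨆ i, (M i).restrictScalars K) →ₐ[K] N,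
        σ.toAlgHom.comp g = g := by
      intro g
      refine IntermediateField.algHom_ext_of_eq_adjoin K
        (IntermediateField.iSup_eq_adjoin K (fun i => (M i).restrictScalars K)) ?_
      intro x hx
      rw [Set.mem_iUnion] at hx
      obtain ⟨i, hxi⟩ := hx
      have h2 := AlgHom.congr_fun
        (hfix i (g.comp (IntermediateField.inclusion
          (le_iSup (fun i => (M i).restrictScalars K) i)))) ⟨x, hxi⟩
      exact h2
    -- the fixed field of σ contains the normal closure, i.e. everything
    have hfixN : ∀ x : N, σ x = x := by
      have hinv : ∀ y ∈ AlgHom.equalizer σ.toAlgHom (AlgHom.id K N), y⁻¹ ∈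
          AlgHom.equalizer σ.toAlgHom (AlgHom.id K N) := by
        intro y hy
        have : σ y = y := hy
        show σ y⁻¹ = y⁻¹
        rw [map_inv₀, this]
      have htop : (⊤ : IntermediateField K N) ≤
          (AlgHom.equalizer σ.toAlgHom (AlgHom.id K N)).toIntermediateField hinv := by
        rw [← hN, normalClosure_le_iff]
        rintro f y ⟨x, rfl⟩
        exact AlgHom.congr_fun (hfix2 f) x
      intro x
      exact htop (IntermediateField.mem_top (x := x))
    exact AlgEquiv.ext hfixN
  -- fiber cardinality
  have hc : ∀ ω : (i : Fin r) × (↥(L i) →ₐ[K] N),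
      Fintype.card {t : T // p t = ω} ≤ n := by
    rintro ⟨i, e⟩
    letI : Algebra ↥(L i) ↥((M i).restrictScalars K) :=
      inferInstanceAs (Algebra ↥(L i) ↥(M i))
    letI : IsScalarTower K ↥(L i) ↥((M i).restrictScalars K) :=
      IsScalarTower.of_algebraMap_eq (fun x => Subtype.ext rfl)
    haveI hfd : FiniteDimensional ↥(L i) ↥((M i).restrictScalars K) :=
      inferInstanceAs (FiniteDimensional ↥(L i) ↥(M i))
    haveI hsep0 : Algebra.IsSeparable ↥(L i) N :=
      Algebra.isSeparable_tower_top_of_isSeparable K ↥(L i) N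
    haveI hsep : Algebra.IsSeparable ↥(L i) ↥((M i).restrictScalars K) := by
      exact inferInstanceAs (Algebra.IsSeparable ↥(L i) ↥(M i))
    -- fiber over ⟨i, e⟩ in the sigma type
    have fib : {t : T // p t = ⟨i, e⟩} ≃
        {f : ↥((M i).restrictScalars K) →ₐ[K] N //
          f.comp (IntermediateField.inclusion (hLM i)) = e} :=
      { toFun := fun x => ⟨(show x.1.1 = i from congrArg Sigma.fst x.2) ▸ x.1.2, by
          obtain ⟨⟨j, f⟩, h⟩ := x
          have hj : j = i := congrArg Sigma.fst h
          subst hj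
          exact eq_of_heq (Sigma.mk.inj_iff.mp h).2⟩
        invFun := fun f => ⟨⟨i, f.1⟩, by
          show (⟨i, f.1.comp (IntermediateField.inclusion (hLM i))⟩ :
            (i : Fin r) × (↥(L i) →ₐ[K] N)) = ⟨i, e⟩
          rw [f.2]⟩
        left_inv := fun x => by
          obtain ⟨⟨j, f⟩, h⟩ := x
          have hj : j = i := congrArg Sigma.fst h
          subst hj
          exact Subtype.ext rfl
        right_inv := fun f => Subtype.ext rfl }
    have hsplits : ∀ x : ↥((M i).restrictScalars K),
        ((minpoly ↥(L i) x).map (e.toRingHom : ↥(L i) →+* N)).Splits := by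
      intro x
      have hint : IsIntegral K x := IsIntegral.of_finite K x
      have hintN : IsIntegral K (((M i).restrictScalars K).val x) := IsIntegral.of_finite K _
      have hd : minpoly ↥(L i) x ∣ (minpoly K x).map (algebraMap K ↥(L i)) :=
        minpoly.dvd_map_of_isScalarTower K ↥(L i) x
      have hmp : minpoly K x = minpoly K (((M i).restrictScalars K).val x) :=
        (minpoly.algHom_eq ((M i).restrictScalars K).val Subtype.val_injective x).symm
      rw [hmp] at hd
      have hsp : ((((minpoly K (((M i).restrictScalars K).val x))).map
          (algebraMap K ↥(L i))).map (e.toRingHom : ↥(L i) →+* N)).Splits := by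
        rw [Polynomial.map_map]
        have hcomp : (e.toRingHom : ↥(L i) →+* N).comp (algebraMap K ↥(L i)) = algebraMap K N :=
          RingHom.ext fun k => e.commutes k
        rw [hcomp]
        exact Normal.splits inferInstance _
      refine Polynomial.Splits.of_dvd hsp ?_ (Polynomial.map_dvd _ hd)
      exact Polynomial.map_ne_zero (Polynomial.map_ne_zero (minpoly.ne_zero hintN))
    -- relate fibers via `algHomEquivSigma`
    let EQ := algHomEquivSigma (A := K) (B := ↥(L i))
      (C := ↥((M i).restrictScalars K)) (D := N)
    have hres : ∀ f : ↥((M i).restrictScalars K) →ₐ[K] N,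
        f.comp (IntermediateField.inclusion (hLM i)) = f.restrictDomain ↥(L i) :=
      fun f => AlgHom.ext fun x => rfl
    have fib2 : {f : ↥((M i).restrictScalars K) →ₐ[K] N //
          f.comp (IntermediateField.inclusion (hLM i)) = e} ≃
        {y : Σ g : ↥(L i) →ₐ[K] N,
            (@AlgHom ↥(L i) ↥((M i).restrictScalars K) N _ _ _ _ g.toRingHom.toAlgebra) //
          y.1 = e} :=
      (Equiv.subtypeEquivRight (fun f => by rw [hres f])).trans
        (Equiv.subtypeEquiv EQ (fun f => by exact Iff.rfl))
    have fib3 : {y : Σ g : ↥(L i) →ₐ[K] N,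
            (@AlgHom ↥(L i) ↥((M i).restrictScalars K) N _ _ _ _ g.toRingHom.toAlgebra) //
          y.1 = e} ≃
        (@AlgHom ↥(L i) ↥((M i).restrictScalars K) N _ _ _ _ e.toRingHom.toAlgebra) :=
      { toFun := fun y => y.2 ▸ y.1.2
        invFun := fun b => ⟨⟨e, b⟩, rfl⟩
        left_inv := fun y => by
          obtain ⟨⟨g, b⟩, h⟩ := y
          subst h
          rfl
        right_inv := fun b => rfl }
    have hcard1 : Nat.card {t : T // p t = ⟨i, e⟩}
        = Nat.card (@AlgHom ↥(L i) ↥((M i).restrictScalars K) N _ _ _ _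
            e.toRingHom.toAlgebra) :=
      Nat.card_congr ((fib.trans fib2).trans fib3)
    have hcard2 : Nat.card (@AlgHom ↥(L i) ↥((M i).restrictScalars K) N _ _ _ _
        e.toRingHom.toAlgebra) = Module.finrank ↥(L i) ↥((M i).restrictScalars K) := by
      rw [Nat.card_eq_fintype_card]
      exact @AlgHom.card_of_splits (↥(L i)) (↥((M i).restrictScalars K)) _ _ _ hfd hsep
        N _ e.toRingHom.toAlgebra hsplits
    rw [← Nat.card_eq_fintype_card, hcard1, hcard2]
    exact hMn i
  obtain ⟨ρ, h1, h2⟩ := wreath_aux n p hc act π hcompat hfaith φ hφ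
  exact ⟨ρ, h1, h2⟩
end
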